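/- arXiv:0904.2667 — 3 statements merged into one kernel-verified Lean document; each statement's English description precedes it below -/
import Mathlib

section
/- (Strong fundamental theorem of algebra for quaternionic polynomials) Let f be a regular quaternionic polynomial of degree n > 0 (f(w) = Σ_{i=0}^n wⁱaᵢ, aₙ ≠ 0). Then V(f) is non-empty; if α₁,…,α_k are representatives of the distinct conjugacy classes meeting V(f), then Σ_{j=1}^k m_f(αⱼ) = n, where m_f(α) is the largest s with Δ_α^s dividing N(f). In particular, if f has r real zeros, i isolated (non-real, non-spherical) zeros, and s spheres of spherical zeros, then r + i + 2s ≤ n. -/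
noncomputable section
open Polynomial
open scoped Classical

/-- The real quaternions. -/
abbrev Quat := Quaternion ℝ

/-- Evaluation of a regular quaternionic polynomial `p` at `q`: `p(q) = Σᵢ qⁱ aᵢ`
(powers of the variable on the left of the right coefficients). -/
def pevP (p : Quat[X]) (q : Quat) : Quat := p.sum fun i a => q ^ i * a

/-- The conjugate polynomial (coefficientwise quaternionic conjugation). -/
def pconj (p : Quat[X]) : Quat[X] := p.sum fun i a => Polynomial.monomial i (star a)

/-- The normal (symmetrized) polynomial `N(p) = p * conj(p)`; note that polynomial
multiplication in `Quat[X]` is exactly the star product (`w` central). -/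
def Np (p : Quat[X]) : Quat[X] := p * pconj p

/-- The conjugacy class of `α`: quaternions with the same trace and the same norm. -/
def Sset (α : Quat) : Set Quat := {x | x + star x = α + star α ∧ ‖x‖ = ‖α‖}

/-- The characteristic polynomial of `α`: `Δ_α = X² - tr(α)·X + |α|²` (a polynomial
with real, hence central, coefficients). -/
def Δpoly (α : Quat) : Quat[X] :=
  X ^ 2 - Polynomial.C (α + star α) * X + Polynomial.C (algebraMap ℝ Quat (‖α‖ ^ 2))

open scoped Quaternion QuaternionAlgebra

/-! ### basic pevP toolkit -/

abbrev φq : ℝ →+* Quat := algebraMap ℝ Quat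

lemma φq_comm (r : ℝ) (x : Quat) : Commute (φq r) x := by
  simpa using Quaternion.coe_commute r x

lemma pevP_add (p q : Quat[X]) (x : Quat) : pevP (p + q) x = pevP p x + pevP q x := by
  unfold pevP
  exact Polynomial.sum_add_index p q _ (by simp) (by intros; rw [mul_add])

lemma pevP_zero (x : Quat) : pevP 0 x = 0 := by simp [pevP]

def pevPhom (x : Quat) : Quat[X] →+ Quat where
  toFun p := pevP p x
  map_zero' := by simp [pevP]
  map_add' p q := pevP_add p q x

lemma pevP_monomial (i : ℕ) (a : Quat) (x : Quat) :
    pevP (Polynomial.monomial i a) x = x ^ i * a := by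
  unfold pevP
  rw [Polynomial.sum_monomial_index]
  simp

lemma pevP_sum {ι : Type*} (s : Finset ι) (g : ι → Quat[X]) (x : Quat) :
    pevP (∑ i ∈ s, g i) x = ∑ i ∈ s, pevP (g i) x :=
  map_sum (pevPhom x) g s

lemma pevP_polysum (p : Quat[X]) (g : ℕ → Quat → Quat[X]) (x : Quat) :
    pevP (p.sum g) x = ∑ i ∈ p.support, pevP (g i (p.coeff i)) x := by
  rw [Polynomial.sum_def, pevP_sum]

lemma pevP_mul (p q : Quat[X]) (x : Quat) :
    pevP (p * q) x = q.sum fun j b => x ^ j * pevP p x * b := by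
  rw [Polynomial.mul_eq_sum_sum, pevP_sum]
  have h1 : ∀ i ∈ p.support,
      pevP (q.sum fun j a => Polynomial.monomial (i + j) (p.coeff i * a)) x
        = ∑ j ∈ q.support, x ^ j * (x ^ i * p.coeff i) * q.coeff j := by
    intro i _
    rw [pevP_polysum]
    apply Finset.sum_congr rfl
    intro j _
    rw [pevP_monomial, add_comm i j, pow_add]
    simp [mul_assoc]
  rw [Finset.sum_congr rfl h1, Finset.sum_comm]
  rw [Polynomial.sum_def]
  apply Finset.sum_congr rfl
  intro j _
  unfold pevP
  rw [Polynomial.sum_def, Finset.mul_sum, Finset.sum_mul]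

lemma pevP_mul_of_root {p : Quat[X]} {x : Quat} (q : Quat[X]) (h : pevP p x = 0) :
    pevP (p * q) x = 0 := by
  rw [pevP_mul, Polynomial.sum_def]
  apply Finset.sum_eq_zero
  intro j _
  rw [h, mul_zero, zero_mul]

lemma conj_pow_aux {β x : Quat} (hβ : β ≠ 0) (j : ℕ) :
    x ^ j * β = β * (β⁻¹ * x * β) ^ j := by
  induction j with
  | zero => simp
  | succ n ih =>
      have hx : x * β = β * (β⁻¹ * x * β) := by
        rw [← mul_assoc, ← mul_assoc, mul_inv_cancel₀ hβ, one_mul]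
      rw [pow_succ', mul_assoc, ih, ← mul_assoc, hx, mul_assoc, ← pow_succ']

lemma pevP_mul_of_ne {p : Quat[X]} {x : Quat} (q : Quat[X]) (h : pevP p x ≠ 0) :
    pevP (p * q) x = pevP p x * pevP q ((pevP p x)⁻¹ * x * (pevP p x)) := by
  rw [pevP_mul]
  generalize hb : pevP p x = β at h ⊢
  simp only [pevP]
  rw [Polynomial.sum_def, Polynomial.sum_def, Finset.mul_sum]
  apply Finset.sum_congr rfl
  intro j _
  rw [← mul_assoc, conj_pow_aux h j, mul_assoc]

lemma pevP_mul_of_commute {p : Quat[X]} {x : Quat} (q : Quat[X])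
    (h : Commute x (pevP p x)) : pevP (p * q) x = pevP p x * pevP q x := by
  rw [pevP_mul]
  generalize hb : pevP p x = β at h ⊢
  simp only [pevP]
  rw [Polynomial.sum_def, Polynomial.sum_def, Finset.mul_sum]
  apply Finset.sum_congr rfl
  intro j _
  rw [← mul_assoc, (h.pow_left j).eq, mul_assoc]

/-! ### evaluation of real polynomials at quaternions -/

def evR (x : Quat) : ℝ[X] →+* Quat :=
  Polynomial.eval₂RingHom' φq x fun a => φq_comm a x

lemma evR_apply (x : Quat) (P : ℝ[X]) : evR x P = Polynomial.eval₂ φq x P := rfl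

lemma pevP_map (P : ℝ[X]) (x : Quat) : pevP (P.map φq) x = evR x P := by
  induction P using Polynomial.induction_on' with
  | add p q hp hq => rw [Polynomial.map_add, pevP_add, hp, hq, map_add]
  | monomial n a =>
      rw [Polynomial.map_monomial, pevP_monomial, evR_apply, Polynomial.eval₂_monomial,
        (φq_comm a (x ^ n)).eq]

lemma commute_evR (x : Quat) (P : ℝ[X]) : Commute x (evR x P) := by
  induction P using Polynomial.induction_on' with
  | add p q hp hq => rw [map_add]; exact hp.add_right hq
  | monomial n a =>
      rw [evR_apply, Polynomial.eval₂_monomial]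
      exact ((φq_comm a x).symm.mul_right ((Commute.refl x).pow_right n))

lemma pevP_map_mul (P : ℝ[X]) (q : Quat[X]) (x : Quat) :
    pevP (P.map φq * q) x = evR x P * pevP q x := by
  rw [pevP_mul_of_commute q (by rw [pevP_map]; exact commute_evR x P), pevP_map]

lemma evR_at_real (P : ℝ[X]) (r : ℝ) : evR (φq r) P = φq (P.eval r) := by
  rw [evR_apply, Polynomial.eval₂_at_apply]

/-! ### quaternion facts -/

open Quaternion in
lemma norm_sq_eq (a : Quat) : ‖a‖ ^ 2 = normSq a := by
  rw [sq, ← normSq_eq_norm_mul_self]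

lemma φq_eq_coe (r : ℝ) : φq r = (r : Quat) := by
  rw [show (φq : ℝ → Quat) = _ from Quaternion.algebraMap_def]

lemma mem_Sset_iff {x α : Quat} : x ∈ Sset α ↔ (x.re = α.re ∧ ‖x‖ = ‖α‖) := by
  unfold Sset
  rw [Set.mem_setOf_eq, Quaternion.self_add_star', Quaternion.self_add_star',
    Quaternion.coe_inj]
  constructor
  · rintro ⟨h1, h2⟩; exact ⟨by linarith, h2⟩
  · rintro ⟨h1, h2⟩; exact ⟨by rw [h1], h2⟩

lemma mem_Sset_self (α : Quat) : α ∈ Sset α := ⟨rfl, rfl⟩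

lemma star_mem_Sset {x α : Quat} (h : x ∈ Sset α) : star x ∈ Sset α := by
  rw [mem_Sset_iff] at h ⊢
  exact ⟨by simp [h.1], by rw [Quaternion.norm_star]; exact h.2⟩

lemma re_mul_comm (a b : Quat) : (a * b).re = (b * a).re := by
  rw [Quaternion.re_mul, Quaternion.re_mul]; ring

lemma conj_mem_Sset {x α d : Quat} (h : x ∈ Sset α) (hd : d ≠ 0) :
    d * x * d⁻¹ ∈ Sset α := by
  rw [mem_Sset_iff] at h ⊢
  constructor
  · rw [re_mul_comm, ← mul_assoc, inv_mul_cancel₀ hd, one_mul]; exact h.1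
  · rw [norm_mul, norm_mul, norm_inv, mul_comm ‖d‖, mul_assoc,
      mul_inv_cancel₀ (norm_ne_zero_iff.mpr hd), mul_one]
    exact h.2

lemma sq_eq_of_mem {x α : Quat} (hx : x ∈ Sset α) :
    x ^ 2 = φq (2 * α.re) * x - φq (‖α‖ ^ 2) := by
  have h1 : φq (2 * α.re) = x + star x := by
    rw [φq_eq_coe, ← Quaternion.self_add_star' α, hx.1]
  have h2 : φq (‖α‖ ^ 2) = star x * x := by
    rw [φq_eq_coe, ← hx.2, norm_sq_eq, Quaternion.star_mul_self]
  rw [h1, h2, add_mul, sq, add_sub_cancel_right]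

lemma im_parts {a : Quat} (h : a.im = 0) : a.imI = 0 ∧ a.imJ = 0 ∧ a.imK = 0 :=
  ⟨by simpa using congrArg QuaternionAlgebra.imI h,
   by simpa using congrArg QuaternionAlgebra.imJ h,
   by simpa using congrArg QuaternionAlgebra.imK h⟩

lemma eq_coe_re_of_im_zero {a : Quat} (h : a.im = 0) : a = (a.re : Quat) := by
  obtain ⟨h1, h2, h3⟩ := im_parts h
  ext <;> simp [h1, h2, h3]

lemma im_zero_of_star_eq {a : Quat} (h : star a = a) : a.im = 0 := by
  have h1 : a.imI = 0 := by have := congrArg QuaternionAlgebra.imI h; simp at this; linarith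
  have h2 : a.imJ = 0 := by have := congrArg QuaternionAlgebra.imJ h; simp at this; linarith
  have h3 : a.imK = 0 := by have := congrArg QuaternionAlgebra.imK h; simp at this; linarith
  ext <;> simp [Quaternion.im, QuaternionAlgebra.im, h1, h2, h3]

lemma im_zero_iff_normSq {a : Quat} : a.im = 0 ↔ Quaternion.normSq a = a.re ^ 2 := by
  rw [Quaternion.normSq_def']
  constructor
  · intro h
    obtain ⟨h1, h2, h3⟩ := im_parts h
    rw [h1, h2, h3]; ring
  · intro h
    have h1 : a.imI ^ 2 + a.imJ ^ 2 + a.imK ^ 2 = 0 := by linarith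
    have hI : a.imI = 0 := by nlinarith [sq_nonneg a.imI, sq_nonneg a.imJ, sq_nonneg a.imK]
    have hJ : a.imJ = 0 := by nlinarith [sq_nonneg a.imI, sq_nonneg a.imJ, sq_nonneg a.imK]
    have hK : a.imK = 0 := by nlinarith [sq_nonneg a.imI, sq_nonneg a.imJ, sq_nonneg a.imK]
    ext <;> simp [Quaternion.im, QuaternionAlgebra.im, hI, hJ, hK]

lemma mem_Sset_real {x α : Quat} (hα : α.im = 0) (hx : x ∈ Sset α) : x = α := by
  rw [mem_Sset_iff] at hx
  have hn : Quaternion.normSq x = Quaternion.normSq α := by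
    rw [← norm_sq_eq, ← norm_sq_eq, hx.2]
  have hx0 : x.im = 0 := by
    rw [im_zero_iff_normSq, hn, hx.1, ← im_zero_iff_normSq]; exact hα
  rw [eq_coe_re_of_im_zero hx0, eq_coe_re_of_im_zero hα, hx.1]

lemma im_zero_of_real_mem {x α : Quat} (hx : x ∈ Sset α) (hxim : x.im = 0) :
    α.im = 0 := by
  rw [mem_Sset_iff] at hx
  rw [im_zero_iff_normSq, ← norm_sq_eq, ← hx.2, norm_sq_eq, ← hx.1,
    ← im_zero_iff_normSq]
  exact hxim

/-! ### pconj and Np -/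

lemma coeff_sum_monomial_apply {S : Type*} [Semiring S] (p : Quat[X]) (F : Quat → S)
    (hF : F 0 = 0) (k : ℕ) :
    (p.sum fun i a => Polynomial.monomial i (F a)).coeff k = F (p.coeff k) := by
  rw [Polynomial.sum_def, Polynomial.finset_sum_coeff]
  simp only [Polynomial.coeff_monomial]
  rw [Finset.sum_ite_eq' p.support k (fun i => F (p.coeff i))]
  by_cases hk : k ∈ p.support
  · rw [if_pos hk]
  · rw [if_neg hk, Polynomial.notMem_support_iff.mp hk, hF]

lemma coeff_pconj (p : Quat[X]) (k : ℕ) : (pconj p).coeff k = star (p.coeff k) :=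
  coeff_sum_monomial_apply p star (star_zero _) k

lemma pconj_eq_zero {p : Quat[X]} (h : pconj p = 0) : p = 0 := by
  apply Polynomial.ext
  intro k
  have h1 := congrArg (fun q => Polynomial.coeff q k) h
  simp only [coeff_pconj, Polynomial.coeff_zero] at h1
  rw [Polynomial.coeff_zero]
  exact star_eq_zero.mp h1

lemma support_pconj (p : Quat[X]) : (pconj p).support = p.support := by
  ext k
  simp [Polynomial.mem_support_iff, coeff_pconj, star_eq_zero]

lemma degree_pconj (p : Quat[X]) : (pconj p).degree = p.degree := by
  unfold Polynomial.degree
  rw [support_pconj]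

lemma natDegree_pconj (p : Quat[X]) : (pconj p).natDegree = p.natDegree := by
  unfold Polynomial.natDegree
  rw [degree_pconj]

lemma leadingCoeff_pconj (p : Quat[X]) : (pconj p).leadingCoeff = star p.leadingCoeff := by
  rw [Polynomial.leadingCoeff, Polynomial.leadingCoeff, natDegree_pconj, coeff_pconj]

lemma leading_Np {p : Quat[X]} (hp : p ≠ 0) :
    p.leadingCoeff * (pconj p).leadingCoeff ≠ 0 :=
  mul_ne_zero (Polynomial.leadingCoeff_ne_zero.mpr hp)
    (by rw [leadingCoeff_pconj]
        exact star_ne_zero.mpr (Polynomial.leadingCoeff_ne_zero.mpr hp))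

lemma natDegree_Np {p : Quat[X]} (hp : p ≠ 0) :
    (Np p).natDegree = 2 * p.natDegree := by
  unfold Np
  rw [Polynomial.natDegree_mul' (leading_Np hp), natDegree_pconj]
  ring

lemma Np_ne_zero {p : Quat[X]} (hp : p ≠ 0) : Np p ≠ 0 :=
  mul_ne_zero hp (fun h => hp (pconj_eq_zero h))

lemma star_coeff_Np (p : Quat[X]) (k : ℕ) : star ((Np p).coeff k) = (Np p).coeff k := by
  unfold Np
  rw [Polynomial.coeff_mul]
  simp only [coeff_pconj]
  rw [star_sum]
  conv_rhs => rw [← Finset.HasAntidiagonal.map_swap_antidiagonal, Finset.sum_map]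
  apply Finset.sum_congr rfl
  intro x _
  simp [star_mul]

/-! ### realification -/

def realify (p : Quat[X]) : ℝ[X] := p.sum fun i a => Polynomial.monomial i a.re

lemma coeff_realify (p : Quat[X]) (k : ℕ) : (realify p).coeff k = (p.coeff k).re :=
  coeff_sum_monomial_apply p QuaternionAlgebra.re rfl k

lemma map_realify {p : Quat[X]} (h : ∀ k, star (p.coeff k) = p.coeff k) :
    (realify p).map φq = p := by
  apply Polynomial.ext
  intro k
  rw [Polynomial.coeff_map, coeff_realify, φq_eq_coe]
  have h1 : (p.coeff k).imI = 0 := by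
    have := congrArg QuaternionAlgebra.imI (h k); simp at this; linarith
  have h2 : (p.coeff k).imJ = 0 := by
    have := congrArg QuaternionAlgebra.imJ (h k); simp at this; linarith
  have h3 : (p.coeff k).imK = 0 := by
    have := congrArg QuaternionAlgebra.imK (h k); simp at this; linarith
  have him : (p.coeff k).im = 0 := by
    ext <;> simp [Quaternion.im, QuaternionAlgebra.im, h1, h2, h3]
  exact (eq_coe_re_of_im_zero him).symm

/-! ### the real quadratic Dr -/

def Dr (α : Quat) : ℝ[X] :=
  X ^ 2 - Polynomial.C (2 * α.re) * X + Polynomial.C (‖α‖ ^ 2)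

lemma Dr_eq' (α : Quat) :
    Dr α = Polynomial.C 1 * X ^ 2 + Polynomial.C (-(2 * α.re)) * X
      + Polynomial.C (‖α‖ ^ 2) := by
  unfold Dr
  rw [map_neg, map_one]
  ring

lemma natDegree_Dr (α : Quat) : (Dr α).natDegree = 2 := by
  rw [Dr_eq']
  exact Polynomial.natDegree_quadratic one_ne_zero

lemma monic_Dr (α : Quat) : (Dr α).Monic := by
  have h : Dr α = X ^ 2 + (Polynomial.C (-(2 * α.re)) * X + Polynomial.C (‖α‖ ^ 2)) := by
    rw [Dr_eq', Polynomial.C_1, one_mul]; ring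
  rw [h]
  apply Polynomial.monic_X_pow_add
  calc Polynomial.degree (Polynomial.C (-(2 * α.re)) * X + Polynomial.C (‖α‖ ^ 2)) ≤ 1 :=
        Polynomial.degree_linear_le
  _ < 2 := by norm_num

lemma Δpoly_eq (α : Quat) : Δpoly α = (Dr α).map φq := by
  unfold Δpoly Dr
  simp only [Polynomial.map_add, Polynomial.map_sub, Polynomial.map_pow,
    Polynomial.map_mul, Polynomial.map_X, Polynomial.map_C]
  rw [show φq (2 * α.re) = α + star α by rw [φq_eq_coe, Quaternion.self_add_star']]

lemma evR_Dr {x α : Quat} (hx : x ∈ Sset α) : evR x (Dr α) = 0 := by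
  unfold Dr
  rw [map_add, map_sub, map_pow, map_mul]
  have h1 : evR x X = x := Polynomial.eval₂_X _ _
  have h2 : ∀ r : ℝ, evR x (Polynomial.C r) = φq r := fun r => Polynomial.eval₂_C _ _
  rw [h1, h2, h2, sq_eq_of_mem hx]
  abel

lemma eval_Dr_nonneg (α : Quat) (x : ℝ) : 0 ≤ (Dr α).eval x := by
  have h : (Dr α).eval x = x ^ 2 - 2 * α.re * x + ‖α‖ ^ 2 := by
    simp [Dr]
  rw [h, norm_sq_eq, Quaternion.normSq_def']
  nlinarith [sq_nonneg (x - α.re), sq_nonneg α.imI, sq_nonneg α.imJ, sq_nonneg α.imK]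

/-! ### sphere representation -/

def ABseq (t ν : ℝ) : ℕ → ℝ × ℝ
  | 0 => (1, 0)
  | (n+1) => (-ν * (ABseq t ν n).2, (ABseq t ν n).1 + t * (ABseq t ν n).2)

lemma pow_eq_AB {t ν : ℝ} {q : Quat} (hq : q ^ 2 = φq t * q - φq ν) (i : ℕ) :
    q ^ i = φq (ABseq t ν i).1 + φq (ABseq t ν i).2 * q := by
  induction i with
  | zero => simp [ABseq]
  | succ n ih =>
      have key : q ^ (n + 1) = φq (ABseq t ν n).1 * q + φq (ABseq t ν n).2 * q ^ 2 := by
        rw [pow_succ, ih, add_mul, mul_assoc, ← sq]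
      rw [key, hq, ABseq]
      simp only [map_add, map_mul, map_neg]
      rw [mul_sub, add_mul]
      have c1 : φq (ABseq t ν n).2 * (φq t * q) = φq t * φq (ABseq t ν n).2 * q := by
        rw [← mul_assoc, (φq_comm t _).eq]
      have c2 : φq (ABseq t ν n).2 * φq ν = φq ν * φq (ABseq t ν n).2 := by
        rw [← map_mul, ← map_mul, mul_comm]
      rw [c1, c2]
      abel_nf
      rw [smul_mul_assoc]

lemma pevP_cd (f : Quat[X]) (α : Quat) :
    ∃ c d : Quat, (∀ q ∈ Sset α, pevP f q = c + q * d) ∧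
      (∀ q ∈ Sset α, pevP (pconj f) q = star c + q * star d) := by
  let A : ℕ → ℝ := fun i => (ABseq (2 * α.re) (‖α‖ ^ 2) i).1
  let B : ℕ → ℝ := fun i => (ABseq (2 * α.re) (‖α‖ ^ 2) i).2
  refine ⟨∑ i ∈ f.support, φq (A i) * f.coeff i, ∑ i ∈ f.support, φq (B i) * f.coeff i,
    ?_, ?_⟩
  · intro q hq
    have hpow := pow_eq_AB (sq_eq_of_mem hq)
    unfold pevP
    rw [Polynomial.sum_def]
    have e1 : ∑ i ∈ f.support, q ^ i * f.coeff i
        = ∑ i ∈ f.support, (φq (A i) * f.coeff i + q * (φq (B i) * f.coeff i)) := by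
      apply Finset.sum_congr rfl
      intro i _
      rw [hpow i, add_mul, (φq_comm (B i) q).eq, mul_assoc]
    rw [e1, Finset.sum_add_distrib, ← Finset.mul_sum]
  · intro q hq
    have hpow := pow_eq_AB (sq_eq_of_mem hq)
    unfold pevP
    rw [Polynomial.sum_def, support_pconj]
    have e1 : ∑ i ∈ f.support, q ^ i * (pconj f).coeff i
        = ∑ i ∈ f.support,
            (φq (A i) * star (f.coeff i) + q * (φq (B i) * star (f.coeff i))) := by
      apply Finset.sum_congr rfl
      intro i _
      rw [coeff_pconj, hpow i, add_mul, (φq_comm (B i) q).eq, mul_assoc]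
    rw [e1, Finset.sum_add_distrib, ← Finset.mul_sum, star_sum, star_sum]
    have st : ∀ (r : ℝ) (a : Quat), star (φq r * a) = φq r * star a := by
      intro r a
      rw [star_mul, show star (φq r) = φq r by rw [φq_eq_coe]; exact Quaternion.star_coe _,
        (φq_comm r _).eq]
    congr 1
    · exact (Finset.sum_congr rfl fun i _ => (st _ _)).symm
    · rw [Finset.sum_congr rfl fun i _ => (st (B i) (f.coeff i))]

lemma sphere_zero_transfer {f : Quat[X]} {α γ : Quat} (hγ : γ ∈ Sset α)
    (h0 : pevP (pconj f) γ = 0) : ∃ q ∈ Sset α, pevP f q = 0 := by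
  obtain ⟨c, d, hcd, hcd'⟩ := pevP_cd f α
  have h1 : star c + γ * star d = 0 := by rw [← hcd' γ hγ]; exact h0
  have h2 : c + d * star γ = 0 := by
    have := congrArg star h1
    rwa [star_add, star_star, star_mul, star_star, star_zero] at this
  by_cases hd : d = 0
  · refine ⟨α, mem_Sset_self α, ?_⟩
    rw [hcd α (mem_Sset_self α), hd, mul_zero]
    rw [hd, zero_mul, add_zero] at h2
    rw [h2, add_zero]
  · refine ⟨d * star γ * d⁻¹, conj_mem_Sset (star_mem_Sset hγ) hd, ?_⟩
    rw [hcd _ (conj_mem_Sset (star_mem_Sset hγ) hd)]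
    rw [mul_assoc, inv_mul_cancel₀ hd, mul_one]
    exact h2

lemma exists_zero_of_Np_root (f : Quat[X]) (ζ : Quat) (h : pevP (Np f) ζ = 0) :
    ∃ q ∈ Sset ζ, pevP f q = 0 := by
  by_cases hf : pevP f ζ = 0
  · exact ⟨ζ, mem_Sset_self ζ, hf⟩
  · unfold Np at h
    rw [pevP_mul_of_ne _ hf] at h
    have h2 : pevP (pconj f) ((pevP f ζ)⁻¹ * ζ * pevP f ζ) = 0 :=
      (mul_eq_zero.mp h).resolve_left hf
    have hmem : (pevP f ζ)⁻¹ * ζ * pevP f ζ ∈ Sset ζ := by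
      have := conj_mem_Sset (mem_Sset_self ζ) (inv_ne_zero hf)
      rwa [inv_inv] at this
    exact sphere_zero_transfer hmem h2

/-! ### real-analytic facts -/

lemma sq_dvd_of_nonneg {H : ℝ[X]} {a : ℝ} (h0 : ∀ x, 0 ≤ H.eval x) (ha : H.eval a = 0) :
    (X - Polynomial.C a) ^ 2 ∣ H := by
  obtain ⟨K, hK⟩ := Polynomial.dvd_iff_isRoot.mpr ha
  have hd : H.derivative.eval a = 0 := by
    have hmin : IsLocalMin (fun x => H.eval x) a :=
      Filter.Eventually.of_forall (fun x => by simpa [ha] using h0 x)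
    have := hmin.deriv_eq_zero
    rwa [Polynomial.deriv] at this
  have hKa : K.eval a = 0 := by
    have hder : H.derivative = K + (X - Polynomial.C a) * K.derivative := by
      rw [hK, Polynomial.derivative_mul, Polynomial.derivative_X_sub_C, one_mul]
    rw [hder] at hd
    simpa using hd
  obtain ⟨L, hL⟩ := Polynomial.dvd_iff_isRoot.mpr hKa
  exact ⟨L, by rw [hK, hL, sq]; ring⟩

lemma nonneg_cofactor {P H : ℝ[X]} (hP : P ≠ 0) (hP0 : ∀ x, 0 ≤ P.eval x)
    (hG : ∀ x, 0 ≤ (P * H).eval x) : ∀ x, 0 ≤ H.eval x := by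
  intro x₀
  by_contra hneg
  push_neg at hneg
  have hev : {x : ℝ | H.eval x < 0} ∈ nhds x₀ :=
    (Polynomial.continuous H).continuousAt.preimage_mem_nhds (Iio_mem_nhds hneg)
  obtain ⟨ε, hε, hball⟩ := Metric.mem_nhds_iff.mp hev
  have hIoo : Set.Ioo (x₀ - ε) (x₀ + ε) ⊆ {x : ℝ | H.eval x < 0} := by
    rw [← Real.ball_eq_Ioo]; exact hball
  have hinf : (Set.Ioo (x₀ - ε) (x₀ + ε)).Infinite := Set.Ioo_infinite (by linarith)
  obtain ⟨x, hx⟩ := (hinf.diff (Polynomial.finite_setOf_isRoot hP)).nonempty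
  have hHx : H.eval x < 0 := hIoo hx.1
  have hPx : P.eval x ≠ 0 := hx.2
  have hPpos : 0 < P.eval x := lt_of_le_of_ne (hP0 x) (Ne.symm hPx)
  have := hG x
  rw [Polynomial.eval_mul] at this
  nlinarith

/-! ### the complex embedding -/

def qI : Quat := ⟨0, 1, 0, 0⟩

lemma qI_sq : qI * qI = -1 := by
  ext <;> simp only [Quaternion.re_mul, Quaternion.imI_mul, Quaternion.imJ_mul,
    Quaternion.imK_mul] <;> simp [qI]

def ψc : ℂ →ₐ[ℝ] Quat := Complex.liftAux qI qI_sq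

lemma ψc_apply (z : ℂ) : ψc z = φq z.re + z.im • qI := Complex.liftAux_apply qI qI_sq z

lemma qI_re : qI.re = 0 := rfl
lemma qI_imI : qI.imI = 1 := rfl
lemma qI_imJ : qI.imJ = 0 := rfl
lemma qI_imK : qI.imK = 0 := rfl

lemma ψc_re (z : ℂ) : (ψc z).re = z.re := by
  rw [ψc_apply, φq_eq_coe]
  simp [qI_re]

lemma ψc_normSq (z : ℂ) : Quaternion.normSq (ψc z) = Complex.normSq z := by
  rw [ψc_apply, φq_eq_coe]
  have h1 : (((z.re : Quat)) + z.im • qI) = (⟨z.re, z.im, 0, 0⟩ : Quat) := by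
    ext <;> simp [qI_re, qI_imI, qI_imJ, qI_imK]
  erw [h1, Quaternion.normSq_def', Complex.normSq_apply]
  simp; ring

lemma ψc_norm_sq (z : ℂ) : ‖ψc z‖ ^ 2 = Complex.normSq z := by
  rw [norm_sq_eq, ψc_normSq]

lemma pevP_Np_psi {G : ℝ[X]} {f : Quat[X]} (hG : G.map φq = Np f) {z : ℂ}
    (hz : (G.map (algebraMap ℝ ℂ)).eval z = 0) : pevP (Np f) (ψc z) = 0 := by
  rw [← hG, pevP_map, evR_apply]
  have hcomp : (φq : ℝ →+* Quat) = (ψc : ℂ →ₐ[ℝ] Quat).toRingHom.comp (algebraMap ℝ ℂ) :=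
    (ψc.comp_algebraMap).symm
  rw [hcomp]
  have := Polynomial.hom_eval₂ G (algebraMap ℝ ℂ) (ψc : ℂ →ₐ[ℝ] Quat).toRingHom z
  rw [show (ψc z : Quat) = (ψc : ℂ →ₐ[ℝ] Quat).toRingHom z from rfl, ← this,
    ← Polynomial.eval_map, hz, map_zero]

lemma conj_root {H : ℝ[X]} {z : ℂ} (h : (H.map (algebraMap ℝ ℂ)).eval z = 0) :
    (H.map (algebraMap ℝ ℂ)).eval (starRingEnd ℂ z) = 0 := by
  have hcomp : (starRingEnd ℂ).comp (algebraMap ℝ ℂ) = algebraMap ℝ ℂ := by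
    apply RingHom.ext
    intro r
    exact Complex.conj_ofReal r
  rw [Polynomial.eval_map] at h ⊢
  rw [← hcomp, ← Polynomial.hom_eval₂, h, map_zero]

lemma map_Dr_eq {α : Quat} {z : ℂ} (hre : α.re = z.re)
    (hnorm : ‖α‖ ^ 2 = Complex.normSq z) :
    (Dr α).map (algebraMap ℝ ℂ) = (X - Polynomial.C z) * (X - Polynomial.C (starRingEnd ℂ z)) := by
  have hrhs : (X - Polynomial.C z) * (X - Polynomial.C (starRingEnd ℂ z))
      = X ^ 2 - Polynomial.C (z + starRingEnd ℂ z) * X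
        + Polynomial.C (z * starRingEnd ℂ z) := by
    rw [map_add, map_mul]; ring
  rw [hrhs, Complex.add_conj, Complex.mul_conj]
  unfold Dr
  simp only [Polynomial.map_add, Polynomial.map_sub, Polynomial.map_pow,
    Polynomial.map_mul, Polynomial.map_X, Polynomial.map_C]
  rw [hre, hnorm]
  norm_num

lemma Dr_real {α : Quat} (h : α.im = 0) : Dr α = (X - Polynomial.C α.re) ^ 2 := by
  have hn : ‖α‖ ^ 2 = α.re ^ 2 := by rw [norm_sq_eq, im_zero_iff_normSq.mp h]
  have expand : (X - Polynomial.C α.re) ^ 2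
      = X ^ 2 - Polynomial.C (2 * α.re) * X + Polynomial.C (α.re ^ 2) := by
    have e1 : Polynomial.C (2 * α.re) = 2 * Polynomial.C α.re := by
      rw [map_mul, map_ofNat]
    have e2 : Polynomial.C (α.re ^ 2) = Polynomial.C α.re ^ 2 := by rw [map_pow]
    rw [e1, e2]; ring
  unfold Dr
  rw [hn, expand]

lemma isCoprime_X_sub {a b : ℂ} (h : a ≠ b) :
    IsCoprime (X - Polynomial.C a : ℂ[X]) (X - Polynomial.C b) := by
  refine ⟨-Polynomial.C ((a - b)⁻¹), Polynomial.C ((a - b)⁻¹), ?_⟩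
  have h1 : (a - b) ≠ 0 := sub_ne_zero.mpr h
  have h2 : (-Polynomial.C ((a - b)⁻¹)) * (X - Polynomial.C a)
      + Polynomial.C ((a - b)⁻¹) * (X - Polynomial.C b)
      = Polynomial.C ((a - b)⁻¹) * (Polynomial.C a - Polynomial.C b) := by ring
  rw [h2, ← map_sub, ← map_mul, inv_mul_cancel₀ h1, map_one]

/-! ### nonnegativity of G on the reals -/

lemma pevP_pconj_real (f : Quat[X]) (x : ℝ) :
    pevP (pconj f) (φq x) = star (pevP f (φq x)) := by
  unfold pevP
  rw [Polynomial.sum_def, Polynomial.sum_def, support_pconj, star_sum]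
  apply Finset.sum_congr rfl
  intro i _
  rw [coeff_pconj, star_mul]
  have hs : star ((φq x) ^ i) = (φq x) ^ i := by
    rw [← map_pow, φq_eq_coe]
    exact Quaternion.star_coe _
  rw [hs, (φq_comm (x) _).pow_left i]

lemma eval_G_nonneg {G : ℝ[X]} {f : Quat[X]} (hG : G.map φq = Np f) (x : ℝ) :
    0 ≤ G.eval x := by
  have h1 : φq (G.eval x) = pevP (Np f) (φq x) := by
    rw [← hG, pevP_map, evR_at_real]
  have h2 : pevP (Np f) (φq x)
      = pevP f (φq x) * star (pevP f (φq x)) := by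
    unfold Np
    rw [pevP_mul_of_commute _ ((φq_comm x _)), pevP_pconj_real]
  have h3 : φq (G.eval x) = φq (Quaternion.normSq (pevP f (φq x))) := by
    rw [h1, h2, Quaternion.self_mul_star]
    exact (φq_eq_coe _).symm
  have h4 := Quaternion.algebraMap_injective h3
  rw [h4]
  exact Quaternion.normSq_nonneg

/-! ### divisibility transfer -/

lemma dvd_G_iff {G : ℝ[X]} {f : Quat[X]} (hG : G.map φq = Np f) (α : Quat) (s : ℕ) :
    Dr α ^ s ∣ G ↔ Δpoly α ^ s ∣ Np f := by
  rw [← hG, Δpoly_eq, ← Polynomial.map_pow,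
    Polynomial.map_dvd_map φq Quaternion.algebraMap_injective ((monic_Dr α).pow s)]

lemma degree_Dr (α : Quat) : (Dr α).degree = 2 := by
  rw [Polynomial.degree_eq_natDegree (monic_Dr α).ne_zero, natDegree_Dr]
  rfl

lemma Dr_dvd_G {f : Quat[X]} {G : ℝ[X]} (hG : G.map φq = Np f) {α x : Quat}
    (hx : x ∈ Sset α) (h0 : pevP f x = 0) : Dr α ∣ G := by
  by_cases hα : α.im = 0
  · -- real case
    have hxα : x = α := mem_Sset_real hα hx
    have hcoe : φq α.re = α := by rw [φq_eq_coe]; exact (eq_coe_re_of_im_zero hα).symm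
    have hev : G.eval α.re = 0 := by
      apply Quaternion.algebraMap_injective
      show φq (G.eval α.re) = φq 0
      have he : φq (G.eval α.re) = pevP (Np f) (φq α.re) := by
        rw [← hG, pevP_map, evR_at_real]
      rw [map_zero, he, hcoe, ← hxα]
      exact pevP_mul_of_root _ h0
    rw [Dr_real hα]
    exact sq_dvd_of_nonneg (eval_G_nonneg hG) hev
  · -- sphere case
    have hmod := Polynomial.modByMonic_add_div G (Dr α)
    set R := G %ₘ Dr α with hR
    have hDrne : Dr α ≠ 1 := by
      intro h
      have h2 := natDegree_Dr α
      rw [h] at h2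
      simp at h2
    have hdegR : R.natDegree ≤ 1 := by
      have h6 := Polynomial.natDegree_modByMonic_lt G (monic_Dr α) hDrne
      rw [natDegree_Dr, ← hR] at h6
      omega
    have hevG : evR x G = 0 := by
      rw [← pevP_map, hG]
      exact pevP_mul_of_root _ h0
    have hevR : evR x R = 0 := by
      have := congrArg (evR x) hmod
      rw [map_add, map_mul, evR_Dr hx, zero_mul, add_zero] at this
      rw [this]; exact hevG
    have hRX := Polynomial.eq_X_add_C_of_natDegree_le_one hdegR
    have eC : ∀ r : ℝ, evR x (Polynomial.C r) = φq r := fun r => Polynomial.eval₂_C _ _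
    have eX : evR x (X : ℝ[X]) = x := Polynomial.eval₂_X _ _
    rw [hRX, map_add, map_mul, eC, eC, eX] at hevR
    have hevR' : φq (R.coeff 1) * x + φq (R.coeff 0) = 0 := hevR
    have hr1 : R.coeff 1 = 0 := by
      by_contra hr1
      have hne : φq (R.coeff 1) ≠ 0 := fun hh =>
        hr1 (Quaternion.algebraMap_injective (by rw [hh, map_zero]))
      have h5 : φq (R.coeff 1) * x = -(φq (R.coeff 0)) :=
        eq_neg_of_add_eq_zero_left hevR'
      have hxval : x = ((((R.coeff 1)⁻¹ * (-(R.coeff 0))) : ℝ) : Quat) := by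
        have hx2 : x = (φq (R.coeff 1))⁻¹ * (-(φq (R.coeff 0))) := by
          rw [← h5, ← mul_assoc, inv_mul_cancel₀ hne, one_mul]
        rw [hx2, φq_eq_coe, φq_eq_coe, ← Quaternion.coe_neg, ← Quaternion.coe_inv,
          ← Quaternion.coe_mul]
      have hxim : x.im = 0 := by rw [hxval]; rfl
      exact hα (im_zero_of_real_mem hx hxim)
    have hr0 : R.coeff 0 = 0 := by
      rw [hr1, map_zero, zero_mul, zero_add] at hevR'
      exact Quaternion.algebraMap_injective (by rw [hevR', map_zero])
    have hR0 : R = 0 := by rw [hRX, hr1, hr0]; simp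
    exact (Polynomial.modByMonic_eq_zero_iff_dvd (monic_Dr α)).mp hR0

/-! ### centrality of real-coefficient polynomials in Quat[X] -/

lemma map_comm (P : ℝ[X]) (q : Quat[X]) : P.map φq * q = q * P.map φq := by
  apply Polynomial.ext
  intro k
  rw [Polynomial.coeff_mul, Polynomial.coeff_mul]
  conv_rhs => rw [← Finset.HasAntidiagonal.map_swap_antidiagonal, Finset.sum_map]
  apply Finset.sum_congr rfl
  intro x _
  simp only [Function.Embedding.coeFn_mk, Prod.fst_swap, Prod.snd_swap]
  simp only [Polynomial.coeff_map]
  exact (φq_comm _ _).eq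

lemma pconj_map_mul (P : ℝ[X]) (q : Quat[X]) :
    pconj (P.map φq * q) = P.map φq * pconj q := by
  apply Polynomial.ext
  intro k
  rw [coeff_pconj, Polynomial.coeff_mul, Polynomial.coeff_mul, star_sum]
  apply Finset.sum_congr rfl
  intro x _
  rw [Polynomial.coeff_map, coeff_pconj, star_mul]
  rw [show star (φq (P.coeff x.1)) = φq (P.coeff x.1) by
    rw [φq_eq_coe]; exact Quaternion.star_coe _]
  exact ((φq_comm _ _).eq).symm

lemma Δ_sq_dvd_Np {f : Quat[X]} {α : Quat} (hα : α.im ≠ 0)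
    (hall : ∀ x ∈ Sset α, pevP f x = 0) : Δpoly α ^ 2 ∣ Np f := by
  have hmonic : (Δpoly α).Monic := by
    rw [Δpoly_eq]; exact (monic_Dr α).map φq
  have hmod := Polynomial.modByMonic_add_div f (Δpoly α)
  set r := f %ₘ Δpoly α with hr
  -- degree bound
  have hΔne : Δpoly α ≠ 1 := by
    intro h
    have h2 : (Δpoly α).natDegree = 2 := by
      rw [Δpoly_eq, Polynomial.natDegree_map_eq_of_injective
        Quaternion.algebraMap_injective, natDegree_Dr]
    rw [h] at h2
    simp at h2
  have hdegr : r.natDegree ≤ 1 := by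
    have h6 := Polynomial.natDegree_modByMonic_lt f hmonic hΔne
    have h7 : (Δpoly α).natDegree = 2 := by
      rw [Δpoly_eq, Polynomial.natDegree_map_eq_of_injective
        Quaternion.algebraMap_injective, natDegree_Dr]
    rw [h7, ← hr] at h6
    omega
  have hrX := Polynomial.eq_X_add_C_of_natDegree_le_one hdegr
  -- evaluate on the sphere
  have hev : ∀ x ∈ Sset α, x * r.coeff 1 + r.coeff 0 = 0 := by
    intro x hxm
    have h1 : pevP f x = pevP r x + pevP (Δpoly α * (f /ₘ Δpoly α)) x := by
      rw [← pevP_add, hmod]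
    have h2 : pevP (Δpoly α * (f /ₘ Δpoly α)) x = 0 := by
      rw [Δpoly_eq, pevP_map_mul, evR_Dr hxm, zero_mul]
    have h3 : pevP r x = x * r.coeff 1 + r.coeff 0 := by
      conv_lhs => rw [hrX]
      rw [pevP_add, Polynomial.C_mul_X_eq_monomial, pevP_monomial,
        ← Polynomial.monomial_zero_left, pevP_monomial]
      simp
    rw [hall x hxm, h2, add_zero, h3] at h1
    exact h1.symm
  have hαs : star α ∈ Sset α := star_mem_Sset (mem_Sset_self α)
  have e1 := hev α (mem_Sset_self α)
  have e2 := hev (star α) hαs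
  have hsub : (α - star α) * r.coeff 1 = 0 := by
    rw [sub_mul]
    have := sub_eq_zero.mpr (e1.trans e2.symm)
    calc α * r.coeff 1 - star α * r.coeff 1
        = (α * r.coeff 1 + r.coeff 0) - (star α * r.coeff 1 + r.coeff 0) := by abel
    _ = 0 := by rw [e1, e2, sub_zero]
  have hαns : α - star α ≠ 0 := by
    intro h
    apply hα
    exact im_zero_of_star_eq (sub_eq_zero.mp h).symm
  have hr1 : r.coeff 1 = 0 := by
    rcases mul_eq_zero.mp hsub with h | h
    · exact absurd h hαns
    · exact h
  have hr0 : r.coeff 0 = 0 := by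
    have := e1
    rw [hr1, mul_zero, zero_add] at this
    exact this
  have hr0' : r = 0 := by rw [hrX, hr1, hr0]; simp
  -- f = Δ * Q
  have hfΔ : f = Δpoly α * (f /ₘ Δpoly α) := by
    conv_lhs => rw [← hmod]
    rw [hr0', zero_add]
  set Q := f /ₘ Δpoly α
  refine ⟨Q * pconj Q, ?_⟩
  unfold Np
  rw [hfΔ]
  have hpc : pconj (Δpoly α * Q) = Δpoly α * pconj Q := by
    rw [Δpoly_eq]; exact pconj_map_mul _ _
  rw [hpc]
  have hcomm : Q * Δpoly α = Δpoly α * Q := by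
    rw [Δpoly_eq]; exact (map_comm _ _).symm
  calc Δpoly α * Q * (Δpoly α * pconj Q)
      = Δpoly α * (Q * Δpoly α) * pconj Q := by rw [mul_assoc, mul_assoc, mul_assoc]
  _ = Δpoly α * (Δpoly α * Q) * pconj Q := by rw [hcomm]
  _ = Δpoly α ^ 2 * (Q * pconj Q) := by rw [sq]; rw [mul_assoc, mul_assoc, mul_assoc]

/-! ### coprimality of distinct characteristic polynomials -/

def zq (α : Quat) : ℂ := ⟨α.re, Real.sqrt (‖α‖ ^ 2 - α.re ^ 2)⟩

lemma re_sq_le_norm_sq (α : Quat) : α.re ^ 2 ≤ ‖α‖ ^ 2 := by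
  rw [norm_sq_eq, Quaternion.normSq_def']
  nlinarith [sq_nonneg α.imI, sq_nonneg α.imJ, sq_nonneg α.imK]

lemma zq_normSq (α : Quat) : Complex.normSq (zq α) = ‖α‖ ^ 2 := by
  unfold zq
  rw [Complex.normSq_mk]
  have h := Real.sq_sqrt (sub_nonneg.mpr (re_sq_le_norm_sq α))
  nlinarith [h]

lemma map_Dr_zq (α : Quat) :
    (Dr α).map (algebraMap ℝ ℂ)
      = (X - Polynomial.C (zq α)) * (X - Polynomial.C (starRingEnd ℂ (zq α))) :=
  map_Dr_eq rfl (zq_normSq α).symm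

lemma coprime_Dr {α β : Quat} (h : ¬(β.re = α.re ∧ ‖β‖ = ‖α‖)) :
    IsCoprime (Dr α) (Dr β) := by
  have key : ∀ u v : ℂ, (u = zq α ∨ u = starRingEnd ℂ (zq α)) →
      (v = zq β ∨ v = starRingEnd ℂ (zq β)) → u ≠ v := by
    intro u v hu hv huv
    apply h
    have hure : u.re = α.re := by
      rcases hu with hu | hu <;> rw [hu] <;> simp [zq]
    have hvre : v.re = β.re := by
      rcases hv with hv | hv <;> rw [hv] <;> simp [zq]
    have hsq : ∀ γ : Quat, (zq γ).im ^ 2 = ‖γ‖ ^ 2 - γ.re ^ 2 := fun γ =>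
      Real.sq_sqrt (sub_nonneg.mpr (re_sq_le_norm_sq γ))
    have huim : u.im ^ 2 = ‖α‖ ^ 2 - α.re ^ 2 := by
      rcases hu with hu | hu
      · rw [hu]; exact hsq α
      · rw [hu, Complex.conj_im, neg_sq]; exact hsq α
    have hvim : v.im ^ 2 = ‖β‖ ^ 2 - β.re ^ 2 := by
      rcases hv with hv | hv
      · rw [hv]; exact hsq β
      · rw [hv, Complex.conj_im, neg_sq]; exact hsq β
    have hre : β.re = α.re := by rw [← hvre, ← huv, hure]
    have h4 : u.im ^ 2 = v.im ^ 2 := by rw [huv]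
    have h5 : β.re ^ 2 = α.re ^ 2 := by rw [hre]
    have hnormsq : ‖β‖ ^ 2 = ‖α‖ ^ 2 := by linarith
    have : ‖β‖ = ‖α‖ := by
      nlinarith [norm_nonneg β, norm_nonneg α]
    exact ⟨hre, this⟩
  have c11 := isCoprime_X_sub (key _ _ (Or.inl rfl) (Or.inl rfl))
  have c12 := isCoprime_X_sub (key _ _ (Or.inl rfl) (Or.inr rfl))
  have c21 := isCoprime_X_sub (key _ _ (Or.inr rfl) (Or.inl rfl))
  have c22 := isCoprime_X_sub (key _ _ (Or.inr rfl) (Or.inr rfl))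
  have ctot := (c11.mul_right c12).mul_left (c21.mul_right c22)
  rw [← map_Dr_zq, ← map_Dr_zq] at ctot
  exact (Polynomial.isCoprime_map _).mp ctot

/-- Strong fundamental theorem of algebra for regular quaternionic polynomials: `V(f)`
is non-empty; if `α₁, …, α_k` are pairwise non-conjugate representatives of all the
conjugacy classes meeting `V(f)` and `m j` is the multiplicity of `α j` (the largest
`s` with `Δ_{α j}^s ∣ N(f)`), then `Σⱼ m j = n = deg f`; moreover, with `r`, `i`, `s`
the numbers of real, isolated and spherical classes among them, `r + i + 2s ≤ n`. -/
theorem stmt17 (f : Quat[X]) (hn : 0 < f.natDegree) :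
    (∃ q : Quat, pevP f q = 0) ∧
    ∀ (k : ℕ) (α : Fin k → Quat) (m : Fin k → ℕ),
      (∀ j j' : Fin k, j ≠ j' → α j' ∉ Sset (α j)) →
      (∀ j, ∃ x ∈ Sset (α j), pevP f x = 0) →
      (∀ q : Quat, pevP f q = 0 → ∃ j, q ∈ Sset (α j)) →
      (∀ j, Δpoly (α j) ^ (m j) ∣ Np f ∧ ¬ Δpoly (α j) ^ (m j + 1) ∣ Np f) →
      (∑ j, m j = f.natDegree ∧
        (Finset.univ.filter fun j : Fin k => (α j).im = 0).card +
        (Finset.univ.filter fun j : Fin k =>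
          (α j).im ≠ 0 ∧ ¬∀ x ∈ Sset (α j), pevP f x = 0).card +
        2 * (Finset.univ.filter fun j : Fin k =>
          (α j).im ≠ 0 ∧ ∀ x ∈ Sset (α j), pevP f x = 0).card ≤ f.natDegree) := by
  have hf0 : f ≠ 0 := fun h => by simp [h] at hn
  set G := realify (Np f) with hGdef
  have hG : G.map φq = Np f := map_realify (star_coeff_Np f)
  have hGdeg : G.natDegree = 2 * f.natDegree := by
    rw [← Polynomial.natDegree_map_eq_of_injective Quaternion.algebraMap_injective G, hG,
      natDegree_Np hf0]
  have hGne : G ≠ 0 := by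
    intro h
    apply Np_ne_zero hf0
    rw [← hG, h, Polynomial.map_zero]
  have hGnonneg := eval_G_nonneg hG
  have hex : ∃ q : Quat, pevP f q = 0 := by
    have hdeg : 0 < (G.map (algebraMap ℝ ℂ)).degree := by
      rw [Polynomial.degree_map_eq_of_injective (algebraMap ℝ ℂ).injective,
        Polynomial.degree_eq_natDegree hGne, hGdeg]
      exact_mod_cast by omega
    obtain ⟨z, hz⟩ := Complex.exists_root hdeg
    have h0 := pevP_Np_psi hG hz
    obtain ⟨q, _, hq⟩ := exists_zero_of_Np_root f _ h0
    exact ⟨q, hq⟩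
  refine ⟨hex, ?_⟩
  intro k α m hdist hrep hcover hmult
  have hm : ∀ j, Dr (α j) ^ (m j) ∣ G ∧ ¬ Dr (α j) ^ (m j + 1) ∣ G := by
    intro j
    exact ⟨(dvd_G_iff hG _ _).mpr (hmult j).1,
      fun hdvd => (hmult j).2 ((dvd_G_iff hG _ _).mp hdvd)⟩
  have hm1 : ∀ j, 1 ≤ m j := by
    intro j
    by_contra hmj
    push_neg at hmj
    obtain ⟨x, hxm, hx0⟩ := hrep j
    have hdvd := Dr_dvd_G hG hxm hx0
    have hm0 : m j = 0 := by omega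
    exact (hm j).2 (by rw [hm0, zero_add, pow_one]; exact hdvd)
  have hm2 : ∀ j, (α j).im ≠ 0 → (∀ x ∈ Sset (α j), pevP f x = 0) → 2 ≤ m j := by
    intro j him hall
    by_contra hmj
    push_neg at hmj
    have hsq := Δ_sq_dvd_Np him hall
    exact (hmult j).2 (dvd_trans (pow_dvd_pow _ (by omega)) hsq)
  have hcop : ∀ j j' : Fin k, j ≠ j' → IsCoprime (Dr (α j)) (Dr (α j')) := by
    intro j j' hjj
    apply coprime_Dr
    intro hc
    exact hdist j j' hjj (mem_Sset_iff.mpr hc)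
  have hprod : (∏ j, Dr (α j) ^ (m j)) ∣ G :=
    Fintype.prod_dvd_of_coprime (fun j j' hjj => (hcop j j' hjj).pow) (fun j => (hm j).1)
  obtain ⟨H, hH⟩ := hprod
  set P : ℝ[X] := ∏ j, Dr (α j) ^ (m j) with hPdef
  have hPmonic : P.Monic :=
    Polynomial.monic_prod_of_monic _ _ (fun j _ => (monic_Dr _).pow _)
  have hPdeg : P.natDegree = ∑ j, 2 * m j := by
    rw [hPdef, Polynomial.natDegree_prod _ _ (fun j _ => ((monic_Dr (α j)).pow (m j)).ne_zero)]
    apply Finset.sum_congr rfl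
    intro j _
    rw [Polynomial.natDegree_pow, natDegree_Dr]
    ring
  have hHne : H ≠ 0 := by
    intro h
    rw [h, mul_zero] at hH
    exact hGne hH
  have hPnonneg : ∀ x : ℝ, 0 ≤ P.eval x := by
    intro x
    rw [hPdef, Polynomial.eval_prod]
    apply Finset.prod_nonneg
    intro j _
    rw [Polynomial.eval_pow]
    exact pow_nonneg (eval_Dr_nonneg _ _) _
  have hHdeg0 : H.natDegree = 0 := by
    by_contra hd
    have hdeg : 0 < (H.map (algebraMap ℝ ℂ)).degree := by
      rw [Polynomial.degree_map_eq_of_injective (algebraMap ℝ ℂ).injective,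
        Polynomial.degree_eq_natDegree hHne]
      exact_mod_cast Nat.pos_of_ne_zero hd
    obtain ⟨z, hz⟩ := Complex.exists_root hdeg
    have hzG : (G.map (algebraMap ℝ ℂ)).eval z = 0 := by
      rw [hH, Polynomial.map_mul, Polynomial.eval_mul, hz, mul_zero]
    have h0 := pevP_Np_psi hG hzG
    obtain ⟨q, hqm, hq0⟩ := exists_zero_of_Np_root f _ h0
    obtain ⟨j, hj⟩ := hcover q hq0
    have hqre : q.re = z.re := by rw [(mem_Sset_iff.mp hqm).1, ψc_re]
    have hqn : ‖q‖ = ‖ψc z‖ := (mem_Sset_iff.mp hqm).2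
    have hαre : (α j).re = z.re := by rw [← (mem_Sset_iff.mp hj).1, hqre]
    have hαn : ‖α j‖ ^ 2 = Complex.normSq z := by
      rw [← (mem_Sset_iff.mp hj).2, hqn, ψc_norm_sq]
    have hDrH : Dr (α j) ∣ H := by
      by_cases hzim : z.im = 0
      · have hzre : z = ((z.re : ℝ) : ℂ) := Complex.ext rfl (by simp [hzim])
        have hHa : H.eval z.re = 0 := by
          apply (algebraMap ℝ ℂ).injective
          rw [map_zero]
          have he : (H.map (algebraMap ℝ ℂ)).eval ((algebraMap ℝ ℂ) z.re)
              = algebraMap ℝ ℂ (H.eval z.re) := by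
            rw [Polynomial.eval_map, Polynomial.eval₂_at_apply]
          rw [← he]
          have : ((z.re : ℝ) : ℂ) = (algebraMap ℝ ℂ) z.re := rfl
          rw [← this, ← hzre]
          exact hz
        have hHnonneg : ∀ x, 0 ≤ H.eval x :=
          nonneg_cofactor hPmonic.ne_zero hPnonneg (fun x => by rw [← hH]; exact hGnonneg x)
        have hsqd := sq_dvd_of_nonneg hHnonneg hHa
        have hnz : Complex.normSq z = z.re ^ 2 := by
          rw [Complex.normSq_apply, hzim]; ring
        have him : (α j).im = 0 := by
          rw [im_zero_iff_normSq, ← norm_sq_eq, hαn, hnz, hαre]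
        rw [Dr_real him, hαre]
        exact hsqd
      · have hz2 := conj_root (show (H.map (algebraMap ℝ ℂ)).eval z = 0 from hz)
        have hd1 : (X - Polynomial.C z) ∣ H.map (algebraMap ℝ ℂ) :=
          Polynomial.dvd_iff_isRoot.mpr hz
        have hd2 : (X - Polynomial.C (starRingEnd ℂ z)) ∣ H.map (algebraMap ℝ ℂ) :=
          Polynomial.dvd_iff_isRoot.mpr hz2
        have hne : z ≠ starRingEnd ℂ z := fun h =>
          hzim (Complex.conj_eq_iff_im.mp h.symm)
        have hdm := (isCoprime_X_sub hne).mul_dvd hd1 hd2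
        rw [← map_Dr_eq hαre hαn] at hdm
        exact (Polynomial.map_dvd_map _ (algebraMap ℝ ℂ).injective (monic_Dr _)).mp hdm
    have hfinal : Dr (α j) ^ (m j + 1) ∣ G := by
      rw [hH, pow_succ]
      exact mul_dvd_mul
        (Finset.dvd_prod_of_mem (fun j' => Dr (α j') ^ m j') (Finset.mem_univ j)) hDrH
    exact (hm j).2 hfinal
  have hmul2 : ∑ j, 2 * m j = 2 * ∑ j, m j := by rw [Finset.mul_sum]
  have hsum : ∑ j, m j = f.natDegree := by
    have hnd : G.natDegree = P.natDegree + H.natDegree := by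
      rw [hH, Polynomial.natDegree_mul hPmonic.ne_zero hHne]
    rw [hGdeg, hPdeg, hHdeg0, hmul2] at hnd
    omega
  refine ⟨hsum, ?_⟩
  have hcards :
      (Finset.univ.filter fun j : Fin k => (α j).im = 0).card +
      (Finset.univ.filter fun j : Fin k =>
        (α j).im ≠ 0 ∧ ¬∀ x ∈ Sset (α j), pevP f x = 0).card +
      2 * (Finset.univ.filter fun j : Fin k =>
        (α j).im ≠ 0 ∧ ∀ x ∈ Sset (α j), pevP f x = 0).card
      = ∑ j : Fin k,
          ((if (α j).im = 0 then 1 else 0) +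
           ((if (α j).im ≠ 0 ∧ ¬∀ x ∈ Sset (α j), pevP f x = 0 then 1 else 0) +
            2 * (if (α j).im ≠ 0 ∧ ∀ x ∈ Sset (α j), pevP f x = 0 then 1 else 0))) := by
    rw [Finset.card_filter, Finset.card_filter, Finset.card_filter, Finset.mul_sum,
      Finset.sum_add_distrib, Finset.sum_add_distrib]
    ring
  rw [hcards, ← hsum]
  apply Finset.sum_le_sum
  intro j _
  by_cases h1 : (α j).im = 0
  · have e1 : (if (α j).im = 0 then (1 : ℕ) else 0) = 1 := by simp [h1]
    have e2 : (if (α j).im ≠ 0 ∧ ¬∀ x ∈ Sset (α j), pevP f x = 0 then (1 : ℕ) else 0) = 0 := by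
      simp [h1]
    have e3 : (if (α j).im ≠ 0 ∧ ∀ x ∈ Sset (α j), pevP f x = 0 then (1 : ℕ) else 0) = 0 := by
      simp [h1]
    rw [e1, e2, e3]
    simpa using hm1 j
  · by_cases h2 : ∀ x ∈ Sset (α j), pevP f x = 0
    · have e1 : (if (α j).im = 0 then (1 : ℕ) else 0) = 0 := by simp [h1]
      have e2 : (if (α j).im ≠ 0 ∧ ¬∀ x ∈ Sset (α j), pevP f x = 0 then (1 : ℕ) else 0) = 0 :=
        if_neg (fun hc => hc.2 h2)
      have e3 : (if (α j).im ≠ 0 ∧ ∀ x ∈ Sset (α j), pevP f x = 0 then (1 : ℕ) else 0) = 1 :=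
        if_pos ⟨h1, h2⟩
      rw [e1, e2, e3]
      simpa using hm2 j h1 h2
    · have e1 : (if (α j).im = 0 then (1 : ℕ) else 0) = 0 := by simp [h1]
      have e2 : (if (α j).im ≠ 0 ∧ ¬∀ x ∈ Sset (α j), pevP f x = 0 then (1 : ℕ) else 0) = 1 :=
        if_pos ⟨h1, h2⟩
      have e3 : (if (α j).im ≠ 0 ∧ ∀ x ∈ Sset (α j), pevP f x = 0 then (1 : ℕ) else 0) = 0 :=
        if_neg (fun hc => h2 hc.2)
      rw [e1, e2, e3]
      simpa using hm1 j
end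
end

section
/- (Factorization lemma) Let f be a regular quaternionic polynomial of degree n > 0 and α₁ a zero of f. Then there exist quaternions α₂, …, α_n and c ≠ 0 such that f(w) = (w − α₁) * ((w − α₂) * ( ⋯ * ((w − α_n) * c))), and each α_{k+1} is conjugate to some zero of f. -/
noncomputable section
open Polynomial
open scoped Classical

namespace QH

lemma pevP_zero (q : Quat) : pevP 0 q = 0 := Polynomial.sum_zero_index _

lemma pevP_add (p r : Quat[X]) (q : Quat) : pevP (p + r) q = pevP p q + pevP r q :=
  Polynomial.sum_add_index _ _ _ (fun i => by simp) (fun i b₁ b₂ => by rw [mul_add])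

/-- bundled additive hom -/
def pevA (q : Quat) : Quat[X] →+ Quat where
  toFun p := pevP p q
  map_zero' := pevP_zero q
  map_add' p r := pevP_add p r q

lemma pevP_sub (p r : Quat[X]) (q : Quat) : pevP (p - r) q = pevP p q - pevP r q :=
  map_sub (pevA q) p r

lemma pevP_monomial (i : ℕ) (a : Quat) (q : Quat) : pevP (monomial i a) q = q ^ i * a := by
  unfold pevP
  rw [Polynomial.sum_monomial_index]
  simp

lemma pevP_C (a : Quat) (q : Quat) : pevP (C a) q = a := by
  rw [← Polynomial.monomial_zero_left, pevP_monomial]; simp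

lemma pevP_X_sub_C (α q : Quat) : pevP (X - C α) q = q - α := by
  rw [pevP_sub, pevP_C, X, pevP_monomial]; simp

lemma pevP_eq_sum_support (p : Quat[X]) (q : Quat) :
    pevP p q = ∑ i ∈ p.support, q ^ i * p.coeff i := rfl

lemma pevP_finset_sum {ι : Type*} (s : Finset ι) (F : ι → Quat[X]) (q : Quat) :
    pevP (∑ i ∈ s, F i) q = ∑ i ∈ s, pevP (F i) q := map_sum (pevA q) F s

lemma pevP_mul (f g : Quat[X]) (q : Quat) :
    pevP (f * g) q = g.sum fun j b => q ^ j * pevP f q * b := by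
  conv_lhs => rw [← Polynomial.sum_monomial_eq g]
  rw [Polynomial.sum, Finset.mul_sum, pevP_finset_sum, Polynomial.sum]
  refine Finset.sum_congr rfl fun j _ => ?_
  conv_lhs => rw [← Polynomial.sum_monomial_eq f, Polynomial.sum, Finset.sum_mul,
    pevP_finset_sum]
  rw [pevP_eq_sum_support f q, Finset.mul_sum, Finset.sum_mul]
  refine Finset.sum_congr rfl fun i _ => ?_
  rw [Polynomial.monomial_mul_monomial, pevP_monomial, add_comm i j, pow_add,
    mul_assoc, mul_assoc, mul_assoc]

lemma pevP_mul_eq (f g : Quat[X]) (q q' : Quat) (h : q * pevP f q = pevP f q * q') :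
    pevP (f * g) q = pevP f q * pevP g q' := by
  have hj : ∀ j : ℕ, q ^ j * pevP f q = pevP f q * q' ^ j := by
    intro j
    induction j with
    | zero => simp
    | succ m ih => rw [pow_succ', pow_succ', mul_assoc, ih, ← mul_assoc, h, mul_assoc]
  rw [pevP_mul, Polynomial.sum, pevP_eq_sum_support g q', Finset.mul_sum]
  refine Finset.sum_congr rfl fun j _ => ?_
  rw [← mul_assoc, ← hj j]

lemma pevP_mul_of_left_zero {f : Quat[X]} {q : Quat} (g : Quat[X]) (h : pevP f q = 0) :
    pevP (f * g) q = 0 := by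
  rw [pevP_mul_eq f g q q (by rw [h]; simp), h, zero_mul]

/-- Division lemma -/
lemma exists_div (α : Quat) : ∀ (N : ℕ) (f : Quat[X]), f.natDegree ≤ N →
    ∃ g : Quat[X], f = (X - C α) * g + C (pevP f α) := by
  intro N
  induction N with
  | zero =>
    intro f hf
    refine ⟨0, ?_⟩
    rw [Polynomial.eq_C_of_natDegree_le_zero hf, pevP_C, mul_zero, zero_add]
  | succ N ih =>
    intro f hf
    rcases le_or_gt f.natDegree N with hle | hlt
    · exact ih f hle
    have hn : f.natDegree = N + 1 := le_antisymm hf hlt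
    set n := f.natDegree with hndef
    set m : Quat[X] := monomial (n - 1) (f.coeff n) with hm
    set f' := f - (X - C α) * m with hf'
    have hXm : (X - C α) * m = monomial n (f.coeff n) - monomial (n - 1) (α * f.coeff n) := by
      have h1 : n - 1 + 1 = n := by omega
      rw [hm, sub_mul, X_mul_monomial, Polynomial.C_mul_monomial, h1]
    have hcoeff : f'.coeff n = 0 := by
      rw [hf', Polynomial.coeff_sub, hXm, Polynomial.coeff_sub, Polynomial.coeff_monomial,
        Polynomial.coeff_monomial, if_pos rfl, if_neg (by omega)]
      simp
    have hdeg : f'.natDegree ≤ N := by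
      have h1 : f'.natDegree ≤ n := by
        refine le_trans (Polynomial.natDegree_sub_le _ _) ?_
        simp only [max_le_iff, le_refl, true_and]
        refine ⟨le_rfl, ?_⟩
        refine le_trans (Polynomial.natDegree_mul_le (p := X - C α) (q := m)) ?_
        have : m.natDegree ≤ n - 1 := Polynomial.natDegree_monomial_le _
        have : (X - C α).natDegree = 1 := Polynomial.natDegree_X_sub_C α
        omega
      rcases eq_or_ne f' 0 with h0 | h0
      · simp [h0]
      have : f'.natDegree ≠ n := by
        intro he
        exact (Polynomial.leadingCoeff_ne_zero.mpr h0) (by rw [Polynomial.leadingCoeff, he, hcoeff])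
      omega
    have hpev : pevP f' α = pevP f α := by
      rw [hf', pevP_sub, pevP_mul_of_left_zero m (by rw [pevP_X_sub_C]; simp), sub_zero]
    obtain ⟨g', hg'⟩ := ih f' hdeg
    refine ⟨g' + m, ?_⟩
    have hfe : f = f' + (X - C α) * m := by rw [hf']; abel
    conv_lhs => rw [hfe, hg', hpev]
    rw [mul_add]
    abel


/-- left evaluation -/
def levP (p : Quat[X]) (q : Quat) : Quat := p.sum fun i a => a * q ^ i

lemma re_mul_comm (a b : Quat) : (a * b).re = (b * a).re := by
  simp only [Quaternion.re_mul]; ring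

lemma norm_sq_coe (x : Quat) : ((‖x‖ ^ 2 : ℝ) : Quat) = star x * x := by
  rw [Quaternion.star_mul_self, sq, Quaternion.normSq_eq_norm_mul_self]

lemma char_identity (x : Quat) :
    x * x = ((2 * x.re : ℝ) : Quat) * x - ((‖x‖ ^ 2 : ℝ) : Quat) := by
  rw [norm_sq_coe, ← Quaternion.self_add_star', add_mul]
  abel

lemma mem_Sset_iff {x β : Quat} : x ∈ Sset β ↔ x.re = β.re ∧ ‖x‖ = ‖β‖ := by
  unfold Sset
  rw [Set.mem_setOf_eq, Quaternion.self_add_star' x, Quaternion.self_add_star' β,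
    Quaternion.coe_inj]
  constructor
  · rintro ⟨h1, h2⟩; exact ⟨by linarith, h2⟩
  · rintro ⟨h1, h2⟩; exact ⟨by linarith, h2⟩

lemma Sset_self (β : Quat) : β ∈ Sset β := ⟨rfl, rfl⟩

lemma star_mem_Sset {x β : Quat} (h : x ∈ Sset β) : star x ∈ Sset β := by
  rw [mem_Sset_iff] at h ⊢
  exact ⟨by rw [Quaternion.re_star]; exact h.1, by rw [Quaternion.norm_star]; exact h.2⟩

lemma conj_mem_Sset {x β : Quat} (u : Quat) (hu : u ≠ 0) (h : x ∈ Sset β) :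
    u * x * u⁻¹ ∈ Sset β := by
  rw [mem_Sset_iff] at h ⊢
  constructor
  · rw [re_mul_comm, ← mul_assoc, inv_mul_cancel₀ hu, one_mul]; exact h.1
  · rw [norm_mul, norm_mul, norm_inv, mul_comm ‖u‖, mul_assoc,
      mul_inv_cancel₀ (norm_ne_zero_iff.mpr hu), mul_one]
    exact h.2

lemma Sset_eq_of_mem {x β : Quat} (h : x ∈ Sset β) : Sset x = Sset β := by
  obtain ⟨h1, h2⟩ := h
  unfold Sset
  ext y
  rw [Set.mem_setOf_eq, Set.mem_setOf_eq, h1, h2]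

lemma sq_of_mem_Sset {x β : Quat} (h : x ∈ Sset β) :
    x * x = ((2 * β.re : ℝ) : Quat) * x - ((‖β‖ ^ 2 : ℝ) : Quat) := by
  rw [mem_Sset_iff] at h
  rw [char_identity, h.1, h.2]

lemma sq_of_mem_Sset' {x β : Quat} (h : x ∈ Sset β) :
    x * x = (2 * β.re) • x - (‖β‖ ^ 2) • (1 : Quat) := by
  rw [sq_of_mem_Sset h, Quaternion.coe_mul_eq_smul]
  congr 1
  rw [← Quaternion.coe_mul_eq_smul, mul_one]

/-- powers on a sphere -/
lemma pow_rep (β : Quat) : ∃ A B : ℕ → ℝ, A 0 = 1 ∧ B 0 = 0 ∧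
    ∀ x ∈ Sset β, ∀ i : ℕ, x ^ i = (A i) • (1 : Quat) + (B i) • x := by
  classical
  refine ⟨fun i => (Nat.rec ((1 : ℝ), (0 : ℝ))
      (fun _ p => (-(‖β‖ ^ 2) * p.2, p.1 + 2 * β.re * p.2)) i : ℝ × ℝ).1,
    fun i => (Nat.rec ((1 : ℝ), (0 : ℝ))
      (fun _ p => (-(‖β‖ ^ 2) * p.2, p.1 + 2 * β.re * p.2)) i : ℝ × ℝ).2, rfl, rfl, ?_⟩
  intro x hx i
  induction i with
  | zero => simp
  | succ m ih =>
    rw [pow_succ, ih, add_mul, smul_mul_assoc, smul_mul_assoc, one_mul,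
      sq_of_mem_Sset' hx]
    show _ = (-(‖β‖ ^ 2) * _) • (1 : Quat) + (_ + 2 * β.re * _) • x
    rw [smul_sub, smul_smul, smul_smul]
    match_scalars <;> ring


/-- coefficientwise map through monomials -/
lemma coeff_sum_monomial_map {S : Type*} [Semiring S] (h : Quat → S) (h0 : h 0 = 0)
    (p : Quat[X]) (k : ℕ) :
    (p.sum fun i a => Polynomial.monomial i (h a)).coeff k = h (p.coeff k) := by
  classical
  rw [Polynomial.sum, Polynomial.finset_sum_coeff]
  simp only [Polynomial.coeff_monomial]
  rw [Finset.sum_ite_eq' p.support k (fun i => h (p.coeff i))]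
  by_cases hk : k ∈ p.support
  · rw [if_pos hk]
  · rw [if_neg hk, Polynomial.notMem_support_iff.mp hk, h0]

lemma pconj_coeff (p : Quat[X]) (k : ℕ) : (pconj p).coeff k = star (p.coeff k) :=
  coeff_sum_monomial_map star (star_zero _) p k

lemma pevP_pconj (p : Quat[X]) (q : Quat) :
    pevP (pconj p) q = star (levP p (star q)) := by
  unfold pconj
  rw [Polynomial.sum, pevP_finset_sum]
  unfold levP
  rw [Polynomial.sum, star_sum]
  refine Finset.sum_congr rfl fun i _ => ?_
  rw [pevP_monomial, star_mul, star_pow, star_star]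

/-- sphere representation of a polynomial -/
lemma sphere_rep (β : Quat) (f : Quat[X]) : ∃ a b : Quat, ∀ x ∈ Sset β,
    pevP f x = a + x * b ∧ levP f x = a + b * x := by
  obtain ⟨A, B, -, -, hAB⟩ := pow_rep β
  refine ⟨f.sum fun i c => (A i) • c, f.sum fun i c => (B i) • c, fun x hx => ?_⟩
  constructor
  · unfold pevP
    rw [Polynomial.sum, Polynomial.sum, Polynomial.sum, Finset.mul_sum,
      ← Finset.sum_add_distrib]
    refine Finset.sum_congr rfl fun i _ => ?_
    rw [hAB x hx i, add_mul, smul_mul_assoc, one_mul, smul_mul_assoc, mul_smul_comm]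
  · unfold levP
    rw [Polynomial.sum, Polynomial.sum, Polynomial.sum, Finset.sum_mul,
      ← Finset.sum_add_distrib]
    refine Finset.sum_congr rfl fun i _ => ?_
    rw [hAB x hx i, mul_add, mul_smul_comm, mul_one, mul_smul_comm, smul_mul_assoc]

lemma star_coeff_Np (p : Quat[X]) (k : ℕ) : star ((Np p).coeff k) = (Np p).coeff k := by
  unfold Np
  rw [Polynomial.coeff_mul, star_sum]
  conv_lhs => rw [← Finset.HasAntidiagonal.map_prodComm_antidiagonal, Finset.sum_map]
  refine Finset.sum_congr rfl fun x _ => ?_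
  simp only [Function.Embedding.coeFn_mk, Equiv.coe_toEmbedding, Equiv.prodComm_apply, Prod.fst_swap, Prod.snd_swap]
  rw [pconj_coeff, pconj_coeff, star_mul, star_star]

lemma self_star_eq_coe {x : Quat} (h : star x = x) : ((x.re : ℝ) : Quat) = x := by
  have hI := congrArg QuaternionAlgebra.imI h
  have hJ := congrArg QuaternionAlgebra.imJ h
  have hK := congrArg QuaternionAlgebra.imK h
  simp only [Quaternion.imI_star, Quaternion.imJ_star, Quaternion.imK_star] at hI hJ hK
  ext
  · rfl
  · simpa using by linarith
  · simpa using by linarith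
  · simpa using by linarith

/-- real part polynomial -/
def reP (p : Quat[X]) : ℝ[X] := p.sum fun i a => Polynomial.monomial i a.re

lemma reP_coeff (p : Quat[X]) (k : ℕ) : (reP p).coeff k = (p.coeff k).re :=
  coeff_sum_monomial_map QuaternionAlgebra.re rfl p k

lemma algQ (r : ℝ) : algebraMap ℝ Quat r = (r : Quat) := rfl

lemma reP_Np_map (p : Quat[X]) : (reP (Np p)).map (algebraMap ℝ Quat) = Np p := by
  refine Polynomial.ext fun k => ?_
  rw [Polynomial.coeff_map, reP_coeff, algQ, self_star_eq_coe (star_coeff_Np p k)]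

lemma pevP_map (P : ℝ[X]) (q : Quat) :
    pevP (P.map (algebraMap ℝ Quat)) q = P.sum fun i c => q ^ i * (c : Quat) := by
  induction P using Polynomial.induction_on' with
  | add p r hp hr =>
    rw [Polynomial.map_add, pevP_add, hp, hr,
      Polynomial.sum_add_index _ _ _ (fun i => by simp) (fun i b₁ b₂ => by push_cast; rw [mul_add])]
  | monomial i c =>
    rw [Polynomial.map_monomial, pevP_monomial, algQ,
      Polynomial.sum_monomial_index c (fun i c => q ^ i * (c : Quat)) (by simp)]

lemma pconj_natDegree (p : Quat[X]) : (pconj p).natDegree = p.natDegree := by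
  apply le_antisymm
  · rw [Polynomial.natDegree_le_iff_coeff_eq_zero]
    intro N hN
    rw [pconj_coeff, Polynomial.coeff_eq_zero_of_natDegree_lt hN, star_zero]
  · rw [Polynomial.natDegree_le_iff_coeff_eq_zero]
    intro N hN
    have := Polynomial.coeff_eq_zero_of_natDegree_lt hN
    rw [pconj_coeff] at this
    simpa using congrArg star this

lemma pconj_leadingCoeff (p : Quat[X]) :
    (pconj p).leadingCoeff = star p.leadingCoeff := by
  rw [Polynomial.leadingCoeff, Polynomial.leadingCoeff, pconj_natDegree, pconj_coeff]

lemma levP_coe (p : Quat[X]) (r : ℝ) : levP p ((r : ℝ) : Quat) = pevP p ((r : ℝ) : Quat) := by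
  unfold levP pevP
  rw [Polynomial.sum, Polynomial.sum]
  refine Finset.sum_congr rfl fun i _ => ?_
  rw [← Quaternion.coe_pow, Quaternion.coe_commutes]

lemma pevP_map_coe (P : ℝ[X]) (r : ℝ) :
    pevP (P.map (algebraMap ℝ Quat)) ((r : ℝ) : Quat) = ((P.eval r : ℝ) : Quat) := by
  rw [pevP_map, Polynomial.eval_eq_sum, Polynomial.sum, Polynomial.sum]
  conv_rhs => rw [← algQ, map_sum]
  refine Finset.sum_congr rfl fun i _ => ?_
  rw [algQ, Quaternion.coe_mul, Quaternion.coe_pow, Quaternion.coe_commutes]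

/-- Fundamental theorem of algebra for quaternionic polynomials. -/
theorem exists_root_quat (g : Quat[X]) (hg : 0 < g.natDegree) : ∃ x : Quat, pevP g x = 0 := by
  classical
  have hg0 : g ≠ 0 := fun h => by simp [h] at hg
  set n := g.natDegree with hn
  set Q := reP (Np g) with hQ
  have hQmap : Q.map (algebraMap ℝ Quat) = Np g := reP_Np_map g
  have hpc0 : pconj g ≠ 0 := by
    intro h
    apply hg0
    have := pconj_coeff g
    rw [h] at this
    refine Polynomial.ext fun k => ?_
    have := this k
    simpa using congrArg star this.symm
  have hNp2n : (Np g).coeff (n + n) = ((Quaternion.normSq g.leadingCoeff : ℝ) : Quat) := by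
    have := Polynomial.coeff_mul_degree_add_degree g (pconj g)
    rw [pconj_natDegree, pconj_leadingCoeff, Quaternion.self_mul_star] at this
    exact this
  have hQcoeff : Q.coeff (n + n) = Quaternion.normSq g.leadingCoeff := by
    rw [hQ, reP_coeff, hNp2n, Quaternion.re_coe]
  have hQne : Q.coeff (n + n) ≠ 0 := by
    rw [hQcoeff]
    exact Quaternion.normSq_ne_zero.mpr (Polynomial.leadingCoeff_ne_zero.mpr hg0)
  set QC := Q.map (algebraMap ℝ ℂ) with hQC
  have hdegQC : QC.degree ≠ 0 := by
    have hle : ((n + n : ℕ) : WithBot ℕ) ≤ QC.degree := by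
      apply Polynomial.le_degree_of_ne_zero
      rw [hQC, Polynomial.coeff_map]
      simpa using hQne
    intro h
    rw [h] at hle
    have : n + n = 0 := by exact_mod_cast Nat.le_zero.mp (by exact_mod_cast hle)
    omega
  obtain ⟨z, hz⟩ := Complex.isAlgClosed.exists_root QC hdegQC
  have hzeval : QC.eval z = 0 := hz
  by_cases him : z.im = 0
  · -- real root case
    have hzr : z = ((z.re : ℝ) : ℂ) := Complex.ext rfl (by simp [him])
    have h0 : algebraMap ℝ ℂ (Q.eval z.re) = 0 := by
      rw [← Polynomial.eval₂_at_apply, ← Polynomial.eval_map, ← hQC, Complex.coe_algebraMap,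
        ← hzr, hzeval]
    have hQr : Q.eval z.re = 0 := by
      exact (algebraMap ℝ ℂ).injective h0
    set rq : Quat := ((z.re : ℝ) : Quat) with hrq
    have hNr : pevP (Np g) rq = 0 := by
      rw [← hQmap, hrq, pevP_map_coe, hQr]
      exact_mod_cast rfl
    have hsplit : pevP (Np g) rq = pevP g rq * pevP (pconj g) rq :=
      pevP_mul_eq g (pconj g) rq rq (Quaternion.coe_commutes _ _)
    have hstarr : pevP (pconj g) rq = star (pevP g rq) := by
      rw [pevP_pconj, hrq, Quaternion.star_coe, levP_coe]
    refine ⟨rq, ?_⟩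
    have h0 : pevP g rq * star (pevP g rq) = 0 := by
      rw [← hstarr, ← hsplit, hNr]
    rw [Quaternion.self_mul_star] at h0
    refine Quaternion.normSq_eq_zero.mp (Quaternion.coe_injective ?_)
    rw [h0]
    exact_mod_cast rfl
  · -- nonreal root case
    set β : Quat := ⟨z.re, z.im, 0, 0⟩ with hβ
    have hβre : β.re = z.re := rfl
    have hβnormsq : ‖β‖ ^ 2 = z.re ^ 2 + z.im ^ 2 := by
      rw [sq, ← Quaternion.normSq_eq_norm_mul_self, Quaternion.normSq_def']
      simp [hβ]
    set t : ℝ := 2 * z.re with ht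
    set nn : ℝ := z.re ^ 2 + z.im ^ 2 with hnn
    set d : ℝ[X] := C 1 * X ^ 2 + C (-t) * X + C nn with hd
    have hmonic : d.Monic := by
      unfold Polynomial.Monic
      rw [hd, Polynomial.leadingCoeff_quadratic one_ne_zero]
    have hdeval : ∀ w : ℂ, (d.map (algebraMap ℝ ℂ)).eval w
        = w ^ 2 + (-t : ℝ) * w + (nn : ℝ) := by
      intro w
      rw [hd]
      simp [Polynomial.eval_map]
      try ring
    have hdz : (d.map (algebraMap ℝ ℂ)).eval z = 0 := by
      rw [hdeval]
      apply Complex.ext <;> (simp [pow_two, Complex.mul_re, Complex.mul_im, ht, hnn]; try ring)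
    have hdzc : (d.map (algebraMap ℝ ℂ)).eval ((starRingEnd ℂ) z) = 0 := by
      rw [hdeval]
      apply Complex.ext <;> (simp [pow_two, Complex.mul_re, Complex.mul_im, ht, hnn]; try ring)
    set R := Q %ₘ d with hR
    have hsplitQ : Q = d * (Q /ₘ d) + R := by
      conv_lhs => rw [← Polynomial.modByMonic_add_div Q d]
      abel
    have hRdeg : R.degree < 2 := by
      have := Polynomial.degree_modByMonic_lt Q hmonic
      have hd2 : d.degree = 2 := by rw [hd]; exact Polynomial.degree_quadratic one_ne_zero
      rwa [hd2] at this
    -- conjugate root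
    have hconj_eval : (QC.eval ((starRingEnd ℂ) z)) = 0 := by
      have hcomp : (starRingEnd ℂ).comp (algebraMap ℝ ℂ) = algebraMap ℝ ℂ := by
        refine RingHom.ext fun r => ?_
        simp [Complex.conj_ofReal]
      have := Polynomial.hom_eval₂ Q (algebraMap ℝ ℂ) (starRingEnd ℂ) z
      rw [← Polynomial.eval_map, ← hQC, hzeval, map_zero, hcomp, ← Polynomial.eval_map,
        ← hQC] at this
      exact this.symm
    have hRz : ((R.map (algebraMap ℝ ℂ)).eval z) = 0 := by
      have := congrArg (fun P : ℝ[X] => (P.map (algebraMap ℝ ℂ)).eval z) hsplitQ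
      simp only [Polynomial.map_add, Polynomial.map_mul, Polynomial.eval_add,
        Polynomial.eval_mul, hdz, zero_mul] at this
      rw [← hQC, hzeval] at this
      simpa using this.symm
    have hRzc : ((R.map (algebraMap ℝ ℂ)).eval ((starRingEnd ℂ) z)) = 0 := by
      have := congrArg (fun P : ℝ[X] => (P.map (algebraMap ℝ ℂ)).eval ((starRingEnd ℂ) z)) hsplitQ
      simp only [Polynomial.map_add, Polynomial.map_mul, Polynomial.eval_add,
        Polynomial.eval_mul, hdzc, zero_mul] at this
      rw [← hQC, hconj_eval] at this
      simpa using this.symm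
    have hR0 : R = 0 := by
      have hrep : R = C (R.coeff 1) * X + C (R.coeff 0) := by
        apply Polynomial.eq_X_add_C_of_natDegree_le_one
        by_cases h0 : R = 0
        · simp [h0]
        · exact Nat.lt_succ_iff.mp ((Polynomial.natDegree_lt_iff_degree_lt h0).mpr hRdeg)
      have h1 : (R.coeff 1 : ℂ) * z + (R.coeff 0 : ℂ) = 0 := by
        have := hRz
        rw [hrep] at this
        simpa using this
      have h2 : (R.coeff 1 : ℂ) * (starRingEnd ℂ) z + (R.coeff 0 : ℂ) = 0 := by
        have := hRzc
        rw [hrep] at this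
        simpa using this
      have hzz : z - (starRingEnd ℂ) z ≠ 0 := by
        intro h
        apply him
        have := congrArg Complex.im h
        simp at this
        linarith
      have hc1 : (R.coeff 1 : ℂ) = 0 := by
        have : (R.coeff 1 : ℂ) * (z - (starRingEnd ℂ) z) = 0 := by
          rw [mul_sub]
          have := sub_eq_zero_of_eq (h1.trans h2.symm)
          linear_combination h1 - h2
        rcases mul_eq_zero.mp this with h | h
        · exact h
        · exact absurd h hzz
      have hc1' : R.coeff 1 = 0 := by exact_mod_cast hc1
      have hc0' : R.coeff 0 = 0 := by
        have : (R.coeff 0 : ℂ) = 0 := by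
          rw [hc1, zero_mul, zero_add] at h1
          exact h1
        exact_mod_cast this
      rw [hrep, hc1', hc0']
      simp
    have hQd : Q = d * (Q /ₘ d) := by
      conv_lhs => rw [hsplitQ]
      rw [hR0, add_zero]
    have hNg_fact : Np g = (d.map (algebraMap ℝ Quat)) * ((Q /ₘ d).map (algebraMap ℝ Quat)) := by
      rw [← hQmap]
      conv_lhs => rw [hQd]
      rw [Polynomial.map_mul]
    have hd_ev : ∀ x ∈ Sset β, pevP (d.map (algebraMap ℝ Quat)) x = 0 := by
      intro x hx
      have hmap : d.map (algebraMap ℝ Quat)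
          = C (algebraMap ℝ Quat 1) * X ^ 2 + C (algebraMap ℝ Quat (-t)) * X
            + C (algebraMap ℝ Quat nn) := by
        rw [hd, Polynomial.map_add, Polynomial.map_add, Polynomial.map_mul,
          Polynomial.map_mul, Polynomial.map_pow, Polynomial.map_C, Polynomial.map_C,
          Polynomial.map_C, Polynomial.map_X]
      rw [hmap]
      simp only [algQ]
      rw [Polynomial.C_mul_X_pow_eq_monomial, Polynomial.C_mul_X_eq_monomial,
        pevP_add, pevP_add, pevP_monomial, pevP_monomial, pevP_C]
      have h1 : ((1 : ℝ) : Quat) = 1 := by exact_mod_cast rfl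
      have hnn1 : ((nn : ℝ) : Quat) = nn • (1 : Quat) := by
        rw [← mul_one ((nn : ℝ) : Quat), Quaternion.coe_mul_eq_smul]
      rw [h1, mul_one, pow_one, Quaternion.mul_coe_eq_smul, hnn1, pow_two,
        sq_of_mem_Sset' hx, hβre, hβnormsq]
      match_scalars <;> (try rw [ht]) <;> ring
    have hsphere : ∀ x ∈ Sset β, pevP (Np g) x = 0 := by
      intro x hx
      rw [hNg_fact]
      exact pevP_mul_of_left_zero _ (hd_ev x hx)
    -- sphere argument
    obtain ⟨a, b, hab⟩ := sphere_rep β g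
    by_cases hroot : pevP g β = 0
    · exact ⟨β, hroot⟩
    set p : Quat := pevP g β with hp
    set q₁ : Quat := p⁻¹ * β * p with hq₁
    have hq₁mem : q₁ ∈ Sset β := by
      have := conj_mem_Sset (p⁻¹) (inv_ne_zero hroot) (Sset_self β)
      rwa [inv_inv] at this
    have hstep : pevP (Np g) β = p * pevP (pconj g) q₁ := by
      refine pevP_mul_eq g (pconj g) β q₁ ?_
      rw [hq₁, ← mul_assoc, ← mul_assoc, mul_inv_cancel₀ hroot, one_mul]
    have hpc : pevP (pconj g) q₁ = 0 := by
      have h0 := hsphere β (Sset_self β)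
      rw [hstep] at h0
      rcases mul_eq_zero.mp h0 with h | h
      · exact absurd h hroot
      · exact h
    have hlev : levP g (star q₁) = 0 := by
      rw [pevP_pconj] at hpc
      simpa using congrArg star hpc
    have hsq₁ : star q₁ ∈ Sset β := star_mem_Sset hq₁mem
    have habs := (hab (star q₁) hsq₁).2
    rw [hlev] at habs
    by_cases hb : b = 0
    · exfalso
      apply hroot
      have ha : a = 0 := by
        have := habs.symm
        rwa [hb, zero_mul, add_zero] at this
      have := (hab β (Sset_self β)).1
      rw [ha, hb, mul_zero, add_zero] at this
      exact this
    · set q₂ : Quat := b * star q₁ * b⁻¹ with hq₂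
      have hq₂mem : q₂ ∈ Sset β := conj_mem_Sset b hb hsq₁
      refine ⟨q₂, ?_⟩
      have := (hab q₂ hq₂mem).1
      rw [this, hq₂, mul_assoc, inv_mul_cancel₀ hb, mul_one, ← habs]


/-- Root transfer: a zero of `g` yields a zero of `(X - C α) * g` in the same sphere. -/
lemma root_transfer (α β : Quat) (g : Quat[X]) (hg : pevP g β = 0) :
    ∃ q : Quat, pevP ((X - C α) * g) q = 0 ∧ q ∈ Sset β := by
  by_cases hc : star β - α = 0
  · refine ⟨β, ?_, Sset_self β⟩
    have hα : α = star β := (sub_eq_zero.mp hc).symm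
    have hcomm : β * star β = star β * β := by
      rw [Quaternion.self_mul_star, Quaternion.star_mul_self]
    have h : β * pevP (X - C α) β = pevP (X - C α) β * β := by
      rw [pevP_X_sub_C, hα, mul_sub, sub_mul, hcomm]
    rw [pevP_mul_eq (X - C α) g β β h, hg, mul_zero]
  · set c : Quat := star β - α with hcdef
    set q : Quat := c * β * c⁻¹ with hq
    have hqmem : q ∈ Sset β := conj_mem_Sset c hc (Sset_self β)
    refine ⟨q, ?_, hqmem⟩
    have hqc : q * c = c * β := by rw [hq, mul_assoc, inv_mul_cancel₀ hc, mul_one]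
    have hsq : q * q = q * (β + star β) - star β * β := by
      rw [sq_of_mem_Sset hqmem, Quaternion.coe_commutes, ← Quaternion.self_add_star',
        norm_sq_coe]
    have harg : (β + star β) - α - β = c := by rw [hcdef]; abel
    have e1 : q * q - q * α - q * β + α * β = 0 := by
      have step1 : q * q - q * α - q * β + α * β
          = q * ((β + star β) - α - β) - star β * β + α * β := by
        rw [mul_sub, mul_sub, hsq]; noncomm_ring
      rw [step1, harg, hqc, hcdef]
      noncomm_ring
    have hkey : q * (q - α) = (q - α) * β := by
      have e2 : q * (q - α) - (q - α) * β = q * q - q * α - q * β + α * β := by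
        noncomm_ring
      rw [e1] at e2
      exact sub_eq_zero.mp e2
    have h : q * pevP (X - C α) q = pevP (X - C α) q * β := by
      rw [pevP_X_sub_C]; exact hkey
    rw [pevP_mul_eq (X - C α) g q β h, hg, mul_zero]

/-- Main inductive factorization. -/
lemma factor_aux : ∀ n : ℕ, 0 < n → ∀ f : Quat[X], f.natDegree = n →
    ∀ α₁ : Quat, pevP f α₁ = 0 →
    ∃ (αs : Fin n → Quat) (c : Quat), c ≠ 0 ∧ (∀ h0 : 0 < n, αs ⟨0, h0⟩ = α₁) ∧
      f = (List.ofFn fun j => X - C (αs j)).foldr (· * ·) (C c) ∧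
      ∀ j, ∃ q : Quat, pevP f q = 0 ∧ αs j ∈ Sset q := by
  intro n
  induction n with
  | zero => intro h; exact absurd h (lt_irrefl 0)
  | succ m ih =>
    intro _ f hdeg α₁ hα₁
    obtain ⟨g, hg⟩ := exists_div α₁ f.natDegree f le_rfl
    rw [hα₁, Polynomial.C_0, add_zero] at hg
    have hf0 : f ≠ 0 := fun h => by rw [h] at hdeg; simp at hdeg
    have hg0 : g ≠ 0 := fun h => hf0 (by rw [hg, h, mul_zero])
    have hdeg' : g.natDegree = m := by
      have h2 : f.natDegree = (X - C α₁).natDegree + g.natDegree := by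
        rw [hg]
        refine Polynomial.natDegree_mul' ?_
        rw [(Polynomial.monic_X_sub_C α₁).leadingCoeff, one_mul]
        exact Polynomial.leadingCoeff_ne_zero.mpr hg0
      rw [Polynomial.natDegree_X_sub_C, hdeg] at h2
      omega
    rcases Nat.eq_zero_or_pos m with hm | hm
    · subst hm
      have hgC : g = C (g.coeff 0) := Polynomial.eq_C_of_natDegree_le_zero hdeg'.le
      have hc0 : g.coeff 0 ≠ 0 := fun h => hg0 (by rw [hgC, h, Polynomial.C_0])
      refine ⟨fun _ => α₁, g.coeff 0, hc0, fun _ => rfl, ?_, ?_⟩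
      · rw [hg]
        conv_lhs => rw [hgC]
        simp [List.ofFn_succ]
      · intro j
        exact ⟨α₁, hα₁, Sset_self α₁⟩
    · obtain ⟨β, hβ⟩ := exists_root_quat g (by rw [hdeg']; exact hm)
      obtain ⟨αs', c, hc, hαs'0, hfact', hconj'⟩ := ih hm g hdeg' β hβ
      refine ⟨Fin.cons α₁ αs', c, hc, ?_, ?_, ?_⟩
      · intro h0
        simp
      · rw [hg]
        conv_lhs => rw [hfact']
        rw [List.ofFn_succ]
        simp only [Fin.cons_zero, Fin.cons_succ]
        rfl
      · intro j
        refine Fin.cases ?_ ?_ j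
        · refine ⟨α₁, hα₁, ?_⟩
          simp only [Fin.cons_zero]
          exact Sset_self α₁
        · intro i
          obtain ⟨q', hq'root, hq'mem⟩ := hconj' i
          obtain ⟨q, hqroot, hqmem⟩ := root_transfer α₁ q' g hq'root
          refine ⟨q, by rw [hg]; exact hqroot, ?_⟩
          rw [Fin.cons_succ, Sset_eq_of_mem hqmem]
          exact hq'mem

end QH

/-- Factorization lemma: a regular quaternionic polynomial of degree `n > 0` with a
zero `α₁` factors as `f = (w - α₁) * ((w - α₂) * (⋯ * ((w - αₙ) * c)))` with `c ≠ 0`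
(the product in `Quat[X]` being the star product), and each `αⱼ` is conjugate to some
zero of `f`. -/
theorem stmt18 (f : Quat[X]) (hn : 0 < f.natDegree)
    (α₁ : Quat) (hα₁ : pevP f α₁ = 0) :
    ∃ (αs : Fin f.natDegree → Quat) (c : Quat), c ≠ 0 ∧ αs ⟨0, hn⟩ = α₁ ∧
      f = (List.ofFn fun j => X - Polynomial.C (αs j)).foldr (· * ·) (Polynomial.C c) ∧
      ∀ j, ∃ q : Quat, pevP f q = 0 ∧ αs j ∈ Sset q := by
  obtain ⟨αs, c, hc, h0, hfact, hconj⟩ := QH.factor_aux f.natDegree hn f rfl α₁ hα₁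
  exact ⟨αs, c, hc, h0 hn, hfact, hconj⟩
end
end

section
/- Let f(w) = Σ_{i=0}^n wⁱaᵢ be a regular quaternionic polynomial of degree n > 0 such that a₁, …, aₙ are all real and a₀ is non-real. Then all zeros of f are isolated (none is real, and f never vanishes on a whole conjugacy sphere), all zeros lie in the complex plane ℂ_I generated by 1 and I = Im(a₀)/|Im(a₀)|, and f has exactly n zeros counted with multiplicity. -/
noncomputable section
open Polynomial
open scoped Classical

namespace S19
abbrev φ : ℝ →+* Quat := algebraMap ℝ Quat

lemma pevP_add (p r : Quat[X]) (q : Quat) : pevP (p + r) q = pevP p q + pevP r q := by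
  unfold pevP
  apply Polynomial.sum_add_index <;> intros <;> simp [mul_add]

lemma pevP_C (a : Quat) (q : Quat) : pevP (C a) q = a := by
  unfold pevP
  rw [Polynomial.sum_C_index] <;> simp

lemma pevP_map (g : ℝ[X]) (q : Quat) : pevP (Polynomial.map φ g) q = Polynomial.aeval q g := by
  induction g using Polynomial.induction_on' with
  | add p r hp hr => rw [Polynomial.map_add, pevP_add, hp, hr, map_add]
  | monomial i a =>
    rw [Polynomial.map_monomial]
    unfold pevP
    rw [Polynomial.sum_monomial_index (φ a) _ (by simp), Polynomial.aeval_monomial]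
    exact (Algebra.commutes _ _).symm

lemma coeff_pconj (p : Quat[X]) (k : ℕ) : (pconj p).coeff k = star (p.coeff k) := by
  unfold pconj
  rw [Polynomial.coeff_sum]
  simp only [Polynomial.coeff_monomial, Polynomial.sum_def]
  by_cases hk : k ∈ p.support
  · rw [Finset.sum_eq_single k (fun i _ hik => by simp [hik]) (by simp_all)]
    simp
  · rw [Finset.sum_eq_zero fun i hi => by
      rcases eq_or_ne i k with rfl|h
      · exact absurd hi hk
      · simp [h]]
    simp [Polynomial.notMem_support_iff.mp hk]

def gre (p : Quat[X]) : ℝ[X] := p.sum fun i a => Polynomial.monomial i a.re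

lemma coeff_gre (p : Quat[X]) (k : ℕ) : (gre p).coeff k = (p.coeff k).re := by
  unfold gre
  rw [Polynomial.coeff_sum]
  simp only [Polynomial.coeff_monomial, Polynomial.sum_def]
  by_cases hk : k ∈ p.support
  · rw [Finset.sum_eq_single k (fun i _ hik => by simp [hik]) (by simp_all)]
    simp
  · rw [Finset.sum_eq_zero fun i hi => by
      rcases eq_or_ne i k with rfl|h
      · exact absurd hi hk
      · simp [h]]
    simp [Polynomial.notMem_support_iff.mp hk, Quaternion.re_zero]

end S19

namespace S19

lemma decomp (f : Quat[X]) (hreal : ∀ i, 1 ≤ i → (f.coeff i).im = 0) :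
    f = Polynomial.map φ (gre f) + C ((f.coeff 0).im) := by
  apply Polynomial.ext; intro k
  rw [Polynomial.coeff_add, Polynomial.coeff_map, coeff_gre, Polynomial.coeff_C]
  rcases eq_or_ne k 0 with rfl|hk
  · simp only [if_pos rfl, Quaternion.algebraMap_def]
    exact (Quaternion.re_add_im _).symm
  · rw [if_neg hk, add_zero, Quaternion.algebraMap_def]
    conv_lhs => rw [← Quaternion.re_add_im (f.coeff k)]
    rw [hreal k (Nat.one_le_iff_ne_zero.mpr hk), add_zero]

lemma pconj_decomp (f : Quat[X]) (hreal : ∀ i, 1 ≤ i → (f.coeff i).im = 0) :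
    pconj f = Polynomial.map φ (gre f) - C ((f.coeff 0).im) := by
  apply Polynomial.ext; intro k
  rw [coeff_pconj, Polynomial.coeff_sub, Polynomial.coeff_map, coeff_gre, Polynomial.coeff_C]
  rcases eq_or_ne k 0 with rfl|hk
  · rw [if_pos rfl, Quaternion.algebraMap_def]
    rw [Quaternion.star_eq_two_re_sub]
    conv_lhs => rw [← Quaternion.re_add_im (f.coeff 0)]
    simp only [Quaternion.re_add, Quaternion.re_coe, Quaternion.re_im, add_zero]
    rw [two_mul, Quaternion.coe_add]
    abel
  · rw [if_neg hk, sub_zero, Quaternion.algebraMap_def]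
    conv_lhs => rw [← Quaternion.re_add_im (f.coeff k)]
    rw [hreal k (Nat.one_le_iff_ne_zero.mpr hk), add_zero, Quaternion.star_coe]

end S19

namespace S19

lemma mul_self_eq (q : Quat) : q * q = (2*q.re) • q - φ (Quaternion.normSq q) := by
  have h2 := Quaternion.self_mul_star q
  have h3 : star q = ((2*q.re : ℝ) : Quat) - q := Quaternion.star_eq_two_re_sub q
  have h4 : q * q = q * ((2*q.re : ℝ) : Quat) - q * star q := by rw [h3, mul_sub]; exact (sub_sub_cancel _ _).symm
  rw [h4, h2, Quaternion.mul_coe_eq_smul, Quaternion.algebraMap_def]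

lemma pow_mem (q : Quat) : ∀ i : ℕ, ∃ c d : ℝ, q ^ i = φ c + d • q := by
  intro i
  induction i with
  | zero => exact ⟨1, 0, by simp⟩
  | succ i ih =>
    obtain ⟨c, d, hcd⟩ := ih
    refine ⟨-(d * Quaternion.normSq q), c + d * (2*q.re), ?_⟩
    rw [pow_succ, hcd, add_mul, smul_mul_assoc, mul_self_eq, Quaternion.algebraMap_def]
    rw [Quaternion.coe_mul_eq_smul, smul_sub, smul_smul, Quaternion.smul_coe, add_smul,
      Quaternion.coe_neg]
    abel

lemma aeval_mem (g : ℝ[X]) (q : Quat) : ∃ c d : ℝ, Polynomial.aeval q g = φ c + d • q := by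
  induction g using Polynomial.induction_on' with
  | add p r hp hr =>
    obtain ⟨c, d, hcd⟩ := hp
    obtain ⟨c', d', hcd'⟩ := hr
    exact ⟨c + c', d + d', by rw [map_add, hcd, hcd', map_add, add_smul]; abel⟩
  | monomial i a =>
    obtain ⟨c, d, hcd⟩ := pow_mem q i
    refine ⟨a * c, a * d, ?_⟩
    rw [Polynomial.aeval_monomial, hcd, Quaternion.algebraMap_def]
    rw [mul_add, ← Quaternion.coe_mul, Quaternion.coe_mul_eq_smul, smul_smul]

end S19

namespace S19

lemma pevP_eq (f : Quat[X]) (hreal : ∀ i, 1 ≤ i → (f.coeff i).im = 0) (q : Quat) :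
    pevP f q = Polynomial.aeval q (gre f) + (f.coeff 0).im := by
  conv_lhs => rw [decomp f hreal]
  rw [pevP_add, pevP_map, pevP_C]

lemma zero_struct (f : Quat[X]) (hreal : ∀ i, 1 ≤ i → (f.coeff i).im = 0)
    (hnr : (f.coeff 0).im ≠ 0) (q : Quat) (hq : pevP f q = 0) :
    ∃ e : ℝ, e ≠ 0 ∧ q.im = e • (f.coeff 0).im := by
  obtain ⟨c, d, hcd⟩ := aeval_mem (gre f) q
  rw [pevP_eq f hreal, hcd] at hq
  have him : d • q.im + (f.coeff 0).im = 0 := by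
    have h := congrArg Quaternion.im hq
    simpa [Quaternion.algebraMap_def, Quaternion.im_add, Quaternion.im_smul, Quaternion.im_zero] using h
  have hd : d ≠ 0 := by
    rintro rfl
    rw [zero_smul, zero_add] at him
    exact hnr him
  refine ⟨-d⁻¹, by simp [hd], ?_⟩
  have : d • q.im = -(f.coeff 0).im := by linear_combination (norm := module) him
  calc q.im = d⁻¹ • (d • q.im) := by rw [smul_smul, inv_mul_cancel₀ hd, one_smul]
  _ = (-d⁻¹) • (f.coeff 0).im := by rw [this, smul_neg, neg_smul]

end S19

namespace S19

lemma part1 (f : Quat[X]) (hreal : ∀ i, 1 ≤ i → (f.coeff i).im = 0)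
    (hnr : (f.coeff 0).im ≠ 0) (q : Quat) (hq : pevP f q = 0) : q.im ≠ 0 := by
  obtain ⟨e, he, him⟩ := zero_struct f hreal hnr q hq
  rw [him]
  exact smul_ne_zero he hnr

lemma part3 (f : Quat[X]) (hreal : ∀ i, 1 ≤ i → (f.coeff i).im = 0)
    (hnr : (f.coeff 0).im ≠ 0) (q : Quat) (hq : pevP f q = 0) :
    ∃ x y : ℝ, q = algebraMap ℝ Quat x + y • (‖(f.coeff 0).im‖⁻¹ • (f.coeff 0).im) := by
  obtain ⟨e, he, him⟩ := zero_struct f hreal hnr q hq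
  have hv : ‖(f.coeff 0).im‖ ≠ 0 := norm_ne_zero_iff.mpr hnr
  refine ⟨q.re, e * ‖(f.coeff 0).im‖, ?_⟩
  rw [smul_smul, mul_assoc, mul_inv_cancel₀ hv, mul_one, ← him, Quaternion.algebraMap_def]
  exact (Quaternion.re_add_im q).symm

def mk4 (a b c d : ℝ) : Quaternion ℝ := ⟨a,b,c,d⟩

lemma sphere_mem (α : Quat) (t : ℝ) (ht : t^2 = α.imI^2 + α.imJ^2 + α.imK^2)
    (b c d : ℝ) (hb : b^2 + c^2 + d^2 = t^2) :
    (mk4 α.re b c d) ∈ Sset α := by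
  constructor
  · rw [Quaternion.self_add_star', Quaternion.self_add_star']
    rfl
  · have h1 : Quaternion.normSq (mk4 α.re b c d) = Quaternion.normSq α := by
      rw [Quaternion.normSq_def', Quaternion.normSq_def']
      rw [show (mk4 α.re b c d).re = α.re from rfl, show (mk4 α.re b c d).imI = b from rfl, show (mk4 α.re b c d).imJ = c from rfl, show (mk4 α.re b c d).imK = d from rfl]
      nlinarith [ht, hb]
    have h2 : ‖(mk4 α.re b c d)‖ * ‖(mk4 α.re b c d)‖ = ‖α‖ * ‖α‖ := by
      rw [← Quaternion.normSq_eq_norm_mul_self, ← Quaternion.normSq_eq_norm_mul_self, h1]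
    exact (mul_self_inj (norm_nonneg _) (norm_nonneg _)).mp h2

lemma part2 (f : Quat[X]) (hreal : ∀ i, 1 ≤ i → (f.coeff i).im = 0)
    (hnr : (f.coeff 0).im ≠ 0) :
    ¬∃ α : Quat, α.im ≠ 0 ∧ ∀ x ∈ Sset α, pevP f x = 0 := by
  rintro ⟨α, hα, hall⟩
  set t : ℝ := ‖α.im‖ with htdef
  have ht0 : t ≠ 0 := norm_ne_zero_iff.mpr hα
  have ht : t^2 = α.imI^2 + α.imJ^2 + α.imK^2 := by
    rw [htdef, sq, ← Quaternion.normSq_eq_norm_mul_self, Quaternion.normSq_def']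
    simp [sq]
  have hβi : (mk4 α.re t 0 0) ∈ Sset α := sphere_mem α t ht t 0 0 (by ring)
  have hβj : (mk4 α.re 0 t 0) ∈ Sset α := sphere_mem α t ht 0 t 0 (by ring)
  obtain ⟨e, he, hime⟩ := zero_struct f hreal hnr _ (hall _ hβi)
  obtain ⟨e', he', hime'⟩ := zero_struct f hreal hnr _ (hall _ hβj)
  set v := (f.coeff 0).im
  have h1 : t = e * v.imI := congrArg QuaternionAlgebra.imI hime
  have h2 : (0:ℝ) = e * v.imJ := congrArg QuaternionAlgebra.imJ hime
  have hJ0 : v.imJ = 0 := by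
    rcases mul_eq_zero.mp h2.symm with h | h
    · exact absurd h he
    · exact h
  have h4 : t = e' * v.imJ := congrArg QuaternionAlgebra.imJ hime'
  rw [hJ0, mul_zero] at h4
  exact ht0 h4

end S19

namespace S19

lemma comm_C_map (v : Quat) (g : ℝ[X]) :
    C v * Polynomial.map φ g = Polynomial.map φ g * C v := by
  apply Polynomial.ext; intro k
  rw [Polynomial.coeff_C_mul, Polynomial.coeff_mul_C, Polynomial.coeff_map]
  exact (Algebra.commutes _ _).symm

lemma vv_eq (v : Quat) (hv : v.re = 0) : v * v = -φ (‖v‖^2) := by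
  have hstar : star v = -v := Quaternion.star_eq_neg.mpr hv
  have h5 := Quaternion.self_mul_star v
  rw [hstar, mul_neg] at h5
  have h6 : v * v = -((Quaternion.normSq v : ℝ) : Quat) := neg_eq_iff_eq_neg.mp h5
  rw [h6, Quaternion.algebraMap_def, Quaternion.normSq_eq_norm_mul_self, ← sq]

def Gpoly (f : Quat[X]) : ℝ[X] := gre f * gre f + C (‖(f.coeff 0).im‖^2)

lemma Np_eq (f : Quat[X]) (hreal : ∀ i, 1 ≤ i → (f.coeff i).im = 0) :
    Np f = Polynomial.map φ (Gpoly f) := by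
  unfold Np Gpoly
  rw [pconj_decomp f hreal]
  nth_rewrite 1 [decomp f hreal]
  have hvv : (C ((f.coeff 0).im) : Quat[X]) * C ((f.coeff 0).im) = -C (φ (‖(f.coeff 0).im‖^2)) := by
    rw [← Polynomial.C_mul, vv_eq _ (Quaternion.re_im _), Polynomial.C_neg]
  rw [add_mul, mul_sub, mul_sub, comm_C_map, hvv]
  rw [Polynomial.map_add, Polynomial.map_mul, Polynomial.map_C]
  abel

end S19

namespace S19

abbrev ρ : ℝ →+* ℂ := algebraMap ℝ ℂ

def Dq (x y : ℝ) : ℝ[X] := X^2 - C (2*x) * X + C (x^2+y^2)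

lemma Dq_monic (x y : ℝ) : (Dq x y).Monic := by
  unfold Dq
  monicity!

lemma rc (r : ℝ) : (ρ r : ℂ) = (r : ℂ) := by
  rw [← Complex.coe_algebraMap]

lemma mapDq (x y : ℝ) :
    Polynomial.map ρ (Dq x y)
      = (X - C (x + y*Complex.I)) * (X - C (x - y*Complex.I)) := by
  unfold Dq
  rw [Polynomial.map_add, Polynomial.map_sub, Polynomial.map_mul, Polynomial.map_pow,
    Polynomial.map_X, Polynomial.map_C, Polynomial.map_C]
  have h1 : (ρ (2*x) : ℂ) = ((x:ℂ) + y*Complex.I) + ((x:ℂ) - y*Complex.I) := by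
    rw [rc]; push_cast; ring
  have h2 : (ρ (x^2+y^2) : ℂ) = ((x:ℂ) + y*Complex.I) * ((x:ℂ) - y*Complex.I) := by
    rw [rc]
    have h3 : ((x:ℂ) + y*Complex.I) * ((x:ℂ) - y*Complex.I)
        = (x:ℂ)^2 - y^2 * (Complex.I*Complex.I) := by ring
    rw [h3, Complex.I_mul_I]
    push_cast; ring
  rw [h1, h2, Polynomial.C_add, Polynomial.C_mul]
  ring

lemma conj_fix (g : ℝ[X]) :
    Polynomial.map (starRingEnd ℂ) (Polynomial.map ρ g) = Polynomial.map ρ g := by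
  rw [Polynomial.map_map]
  congr 1
  ext r
  simp [Complex.conj_ofReal]

lemma mult_iff (g : ℝ[X]) (c : ℝ) (hc : c ≠ 0) (x y : ℝ) (m : ℕ)
    (hA : Polynomial.map ρ g + C ((c:ℂ)*Complex.I) ≠ 0)
    (hz : Polynomial.eval ((x:ℂ) + y*Complex.I) (Polynomial.map ρ g + C ((c:ℂ)*Complex.I)) = 0) :
    (Dq x y)^m ∣ (g*g + C (c^2)) ↔
      m ≤ rootMultiplicity ((x:ℂ) + y*Complex.I) (Polynomial.map ρ g + C ((c:ℂ)*Complex.I)) := by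
  set A : ℂ[X] := Polynomial.map ρ g with hAdef
  set z : ℂ := (x:ℂ) + y*Complex.I with hzdef
  set w : ℂ := (x:ℂ) - y*Complex.I with hwdef
  set hp : ℂ[X] := A + C ((c:ℂ)*Complex.I) with hpdef
  set h2 : ℂ[X] := A - C ((c:ℂ)*Complex.I) with h2def
  have hmapG : Polynomial.map ρ (g*g + C (c^2)) = hp * h2 := by
    rw [Polynomial.map_add, Polynomial.map_mul, Polynomial.map_C, hpdef, h2def]
    have h9 : (ρ (c^2) : ℂ) = -(((c:ℂ)*Complex.I) * ((c:ℂ)*Complex.I)) := by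
      have h8 : ((c:ℂ)*Complex.I) * ((c:ℂ)*Complex.I) = (c:ℂ)^2 * (Complex.I*Complex.I) := by
        ring
      rw [rc, h8, Complex.I_mul_I]
      push_cast; ring
    rw [h9, Polynomial.C_neg, Polynomial.C_mul]
    ring
  have hconj : Polynomial.map (starRingEnd ℂ) hp = h2 := by
    rw [hpdef, h2def, Polynomial.map_add, conj_fix, Polynomial.map_C]
    rw [map_mul, Complex.conj_ofReal, Complex.conj_I, mul_neg, Polynomial.C_neg,
      sub_eq_add_neg]
  have hh2z : Polynomial.eval z h2 ≠ 0 := by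
    have h7 : Polynomial.eval z h2 = Polynomial.eval z hp - 2*((c:ℂ)*Complex.I) := by
      rw [hpdef, h2def]
      simp only [Polynomial.eval_add, Polynomial.eval_sub, Polynomial.eval_C]
      ring
    rw [h7, hz, zero_sub, neg_ne_zero]
    simp [Complex.ext_iff, hc]
  constructor
  · intro hdvd
    have hdvd2 : Polynomial.map ρ ((Dq x y)^m) ∣ Polynomial.map ρ (g*g + C (c^2)) :=
      Polynomial.map_dvd ρ hdvd
    rw [Polynomial.map_pow, mapDq, hmapG] at hdvd2
    have hdvd3 : (X - C z)^m ∣ hp * h2 :=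
      dvd_trans (by rw [mul_pow]; exact dvd_mul_right _ _) hdvd2
    have hcop : IsCoprime ((X - C z)^m) h2 := by
      apply IsCoprime.pow_left
      rw [(Polynomial.irreducible_X_sub_C z).coprime_iff_not_dvd]
      rw [Polynomial.dvd_iff_isRoot]
      exact hh2z
    have hdvd4 : (X - C z)^m ∣ hp := hcop.dvd_of_dvd_mul_right hdvd3
    exact (Polynomial.le_rootMultiplicity_iff hA).mpr hdvd4
  · intro hle
    have hdvd1 : (X - C z)^m ∣ hp := (Polynomial.le_rootMultiplicity_iff hA).mp hle
    have hdvd2 : (X - C w)^m ∣ h2 := by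
      have := Polynomial.map_dvd (starRingEnd ℂ) hdvd1
      rw [hconj, Polynomial.map_pow, Polynomial.map_sub, Polynomial.map_X,
        Polynomial.map_C] at this
      have hwz : (starRingEnd ℂ) z = w := by
        rw [hzdef, hwdef, map_add, map_mul, Complex.conj_ofReal, Complex.conj_ofReal,
          Complex.conj_I]
        ring
      rwa [hwz] at this
    rw [← Polynomial.map_dvd_map ρ ρ.injective ((Dq_monic x y).pow m), Polynomial.map_pow,
      mapDq, hmapG, mul_pow]
    exact mul_dvd_mul hdvd1 hdvd2

end S19

namespace S19

lemma re_of (x y : ℝ) (u : Quat) (hu : u.re = 0) : (φ x + y • u).re = x := by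
  rw [Quaternion.algebraMap_def]
  simp [Quaternion.re_add, Quaternion.re_coe, Quaternion.re_smul, hu]

lemma norm_sq_of (x y : ℝ) (u : Quat) (hu : u.re = 0) (hn : ‖u‖ = 1) :
    ‖φ x + y • u‖^2 = x^2 + y^2 := by
  rw [sq, ← Quaternion.normSq_eq_norm_mul_self]
  have h1 : Quaternion.normSq u = 1 := by
    rw [Quaternion.normSq_eq_norm_mul_self, hn, mul_one]
  rw [Quaternion.normSq_def'] at h1
  rw [Quaternion.normSq_def', Quaternion.algebraMap_def]
  simp only [Quaternion.re_add, Quaternion.imI_add, Quaternion.imJ_add, Quaternion.imK_add,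
    Quaternion.re_coe, Quaternion.imI_coe, Quaternion.imJ_coe, Quaternion.imK_coe,
    Quaternion.re_smul, Quaternion.imI_smul, Quaternion.imJ_smul, Quaternion.imK_smul,
    smul_eq_mul, hu]
  rw [hu] at h1
  linear_combination y^2 * h1

lemma Δpoly_eq (x y : ℝ) (u : Quat) (hu : u.re = 0) (hn : ‖u‖ = 1) :
    Δpoly (φ x + y • u) = Polynomial.map φ (Dq x y) := by
  unfold Δpoly Dq
  rw [Polynomial.map_add, Polynomial.map_sub, Polynomial.map_mul, Polynomial.map_pow,
    Polynomial.map_X, Polynomial.map_C, Polynomial.map_C]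
  have h1 : (φ x + y • u) + star (φ x + y • u) = φ (2*x) := by
    rw [Quaternion.self_add_star', re_of x y u hu, Quaternion.algebraMap_def]
  rw [h1, norm_sq_of x y u hu hn]

end S19


open S19

/-- A regular quaternionic polynomial of degree `n > 0` whose coefficients `a₁, …, aₙ`
are real and whose constant term `a₀` is non-real has only isolated zeros: no zero is
real, no conjugacy sphere is entirely made of zeros, every zero lies in the complex
plane spanned by `1` and `I = Im(a₀)/|Im(a₀)|`, and the multiplicities of the zeros
sum up to `n`. -/
theorem stmt19 (f : Quat[X]) (hn : 0 < f.natDegree)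
    (hreal : ∀ i, 1 ≤ i → (f.coeff i).im = 0) (hnr : (f.coeff 0).im ≠ 0) :
    (∀ q : Quat, pevP f q = 0 → q.im ≠ 0) ∧
    (¬∃ α : Quat, α.im ≠ 0 ∧ ∀ x ∈ Sset α, pevP f x = 0) ∧
    (∀ q : Quat, pevP f q = 0 →
      ∃ x y : ℝ, q = algebraMap ℝ Quat x + y • (‖(f.coeff 0).im‖⁻¹ • (f.coeff 0).im)) ∧
    ∀ (k : ℕ) (α : Fin k → Quat) (m : Fin k → ℕ),
      Function.Injective α →
      (∀ j, pevP f (α j) = 0) →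
      (∀ q : Quat, pevP f q = 0 → ∃ j, q = α j) →
      (∀ j, Δpoly (α j) ^ (m j) ∣ Np f ∧ ¬ Δpoly (α j) ^ (m j + 1) ∣ Np f) →
      ∑ j, m j = f.natDegree := by
  refine ⟨part1 f hreal hnr, part2 f hreal hnr, part3 f hreal hnr, ?_⟩
  intro k α m hinj hz0 hsurj hmult
  classical
  set v : Quat := (f.coeff 0).im with hvdef
  set u : Quat := ‖v‖⁻¹ • v with hudef
  have hvne : v ≠ 0 := hnr
  have hvnorm : ‖v‖ ≠ 0 := norm_ne_zero_iff.mpr hvne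
  have hure : u.re = 0 := by rw [hudef, Quaternion.re_smul, Quaternion.re_im, smul_zero]
  have hunorm : ‖u‖ = 1 := by
    rw [hudef, norm_smul, norm_inv, norm_norm, inv_mul_cancel₀ hvnorm]
  have huu : u * u = -1 := by
    rw [vv_eq u hure, hunorm]
    norm_num
  set ψ : ℂ →ₐ[ℝ] Quat := Complex.liftAux u huu with hψdef
  have hψ : ∀ z : ℂ, ψ z = φ z.re + z.im • u := fun z => Complex.liftAux_apply u huu z
  have hψinj : Function.Injective (⇑ψ) := fun a b h => ψ.toRingHom.injective h
  set hpol : ℂ[X] := Polynomial.map ρ (gre f) + C ((‖v‖:ℂ)*Complex.I) with hpoldef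
  have hvpsi : ψ ((‖v‖:ℂ) * Complex.I) = v := by
    rw [hψ]
    simp only [Complex.mul_re, Complex.mul_im, Complex.ofReal_re, Complex.ofReal_im,
      Complex.I_re, Complex.I_im]
    norm_num
    rw [hudef, smul_smul, mul_inv_cancel₀ hvnorm, one_smul]
  have hpevP : ∀ z : ℂ, pevP f (ψ z) = ψ (Polynomial.eval z hpol) := by
    intro z
    rw [pevP_eq f hreal, hpoldef, Polynomial.eval_add, Polynomial.eval_C, map_add]
    congr 1
    · rw [Polynomial.eval_map, ← Polynomial.aeval_def, ← Polynomial.aeval_algHom_apply]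
    · exact hvpsi.symm
  set n := f.natDegree with hndef
  have hfne : f ≠ 0 := fun h => hvne (by rw [hvdef, h]; simp [Quaternion.im_zero])
  have hflead : f.coeff n ≠ 0 := Polynomial.leadingCoeff_ne_zero.mpr hfne
  have hfre : (f.coeff n).re ≠ 0 := by
    intro h
    apply hflead
    rw [← Quaternion.re_add_im (f.coeff n), hreal n hn, h]
    simp
  have hgdeg : (gre f).natDegree = n :=
    le_antisymm
      (Polynomial.natDegree_le_iff_coeff_eq_zero.mpr fun mm hmm => by
        rw [coeff_gre, Polynomial.coeff_eq_zero_of_natDegree_lt hmm]; simp [Quaternion.re_zero])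
      (Polynomial.le_natDegree_of_ne_zero (by rw [coeff_gre]; exact hfre))
  have hpolcoeff : ∀ mm, n < mm → hpol.coeff mm = 0 := by
    intro mm hmm
    rw [hpoldef, Polynomial.coeff_add, Polynomial.coeff_map, Polynomial.coeff_C,
      Polynomial.coeff_eq_zero_of_natDegree_lt (hgdeg ▸ hmm), if_neg (by omega : ¬ mm = 0)]
    simp
  have hpoln : hpol.coeff n ≠ 0 := by
    rw [hpoldef, Polynomial.coeff_add, Polynomial.coeff_map, Polynomial.coeff_C,
      if_neg (by omega : ¬ n = 0), add_zero, coeff_gre]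
    intro h
    rw [rc] at h
    exact hfre (by exact_mod_cast h)
  have hpolne : hpol ≠ 0 := fun h => hpoln (by rw [h]; simp)
  have hpoldeg : hpol.natDegree = n :=
    le_antisymm (Polynomial.natDegree_le_iff_coeff_eq_zero.mpr hpolcoeff)
      (Polynomial.le_natDegree_of_ne_zero hpoln)
  choose xs ys hxy using fun j => part3 f hreal hnr (α j) (hz0 j)
  have hαj : ∀ j, α j = φ (xs j) + ys j • u := hxy
  set zz : Fin k → ℂ := fun j => (xs j : ℂ) + (ys j) * Complex.I with hzzdef
  have hψz : ∀ j, ψ (zz j) = α j := by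
    intro j
    rw [hψ]
    simp only [hzzdef, Complex.add_re, Complex.add_im, Complex.ofReal_re, Complex.ofReal_im,
      Complex.mul_re, Complex.mul_im, Complex.I_re, Complex.I_im]
    norm_num
    exact (hαj j).symm
  have hroot : ∀ j, Polynomial.eval (zz j) hpol = 0 := by
    intro j
    apply hψinj
    rw [← hpevP, hψz j, hz0 j, map_zero]
  have hmj : ∀ j, m j = Polynomial.rootMultiplicity (zz j) hpol := by
    intro j
    have hΔ : Δpoly (α j) = Polynomial.map φ (Dq (xs j) (ys j)) := by
      rw [hαj j]; exact Δpoly_eq _ _ u hure hunorm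
    obtain ⟨hd1, hd2⟩ := hmult j
    rw [Np_eq f hreal, hΔ, ← Polynomial.map_pow,
      Polynomial.map_dvd_map φ Quaternion.algebraMap_injective ((Dq_monic _ _).pow _),
      show Gpoly f = gre f * gre f + C (‖v‖^2) from rfl,
      mult_iff (gre f) ‖v‖ hvnorm _ _ _ (by rw [← hpoldef]; exact hpolne)
        (by rw [← hpoldef]; exact hroot j), ← hpoldef] at hd1 hd2
    have hzzj : ((xs j : ℂ) + (ys j) * Complex.I) = zz j := by rw [hzzdef]
    rw [hzzj] at hd1 hd2
    omega
  have hcount : ∑ j, m j = ∑ w ∈ hpol.roots.toFinset, hpol.roots.count w := by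
    refine Finset.sum_bij (fun j _ => zz j) ?_ ?_ ?_ ?_
    · intro j _
      rw [Multiset.mem_toFinset, Polynomial.mem_roots hpolne]
      exact hroot j
    · intro j1 _ j2 _ hj
      apply hinj
      rw [← hψz j1, ← hψz j2]
      exact congrArg ψ hj
    · intro w hw
      rw [Multiset.mem_toFinset, Polynomial.mem_roots hpolne] at hw
      have hwz : pevP f (ψ w) = 0 := by
        rw [hpevP, show Polynomial.eval w hpol = 0 from hw, map_zero]
      obtain ⟨j, hj⟩ := hsurj _ hwz
      refine ⟨j, Finset.mem_univ j, hψinj ?_⟩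
      show ψ (zz j) = ψ w
      rw [hψz j]
      exact hj.symm
    · intro j _
      rw [Polynomial.count_roots, hmj j]
  rw [hcount, Multiset.toFinset_sum_count_eq]
  have hcard : Multiset.card hpol.roots = hpol.natDegree :=
    IsAlgClosed.card_roots_eq_natDegree
  rw [hcard, hpoldeg]
end
end
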